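/- arXiv:1107.4073 — 2 statements merged into one kernel-verified Lean document; each statement's English description precedes it below -/
import Mathlib

section
/- Descending chains do not merge (injectivity on the lower half of ranks): let u be a necklace of length n and k an integer with 2k > n and rank(u) ≤ k. Suppose v and v′ are necklaces of rank k with Lyndon representatives w and w′ respectively, each having exactly 2k − n unmatched positions, and suppose u = necklace of w_r and u = necklace of w′_r, where r = k − rank(u). Then v = v′. -/
/-!
Common definitions: binary words of length `n`, rotations, necklaces (the quotient
poset `Bₙ/Cₙ`), the cyclic matching procedure, Lyndon words, the map `φ`,
crossing pairs, and the words `w_t`.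

Throughout, a binary word of length `n` is a function `Fin n → Bool`, where `true`
encodes the letter `1` and `false` the letter `0`.
-/

/-- A binary word of length `n`: `true` encodes the letter `1`, `false` the letter `0`. -/
abbrev Word (n : ℕ) := Fin n → Bool

variable {n : ℕ} [NeZero n]

/-- The rotation `σ_i`, shifting the letters of `w` cyclically by `i` positions (so the
letter at position `j` of `w` appears at position `j + i` of `rot i w`). -/
def rot (i : Fin n) (w : Word n) : Word n := fun j => w (j - i)

lemma rot_rot (i j : Fin n) (w : Word n) : rot i (rot j w) = rot (j + i) w := by
  funext k
  simp [rot, sub_sub, add_comm]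

/-- Two words are equivalent when one is a cyclic rotation of the other. -/
def rotSetoid (n : ℕ) [NeZero n] : Setoid (Word n) where
  r w w' := ∃ i : Fin n, rot i w = w'
  iseqv := by
    refine ⟨fun w => ⟨0, ?_⟩, ?_, ?_⟩
    · funext j; simp [rot]
    · rintro w w' ⟨i, rfl⟩
      refine ⟨-i, ?_⟩
      rw [rot_rot]
      funext j; simp [rot]
    · rintro w w' w'' ⟨i, rfl⟩ ⟨j, rfl⟩
      exact ⟨i + j, (rot_rot j i w).symm⟩

/-- A necklace: an equivalence class of binary words under cyclic rotation. -/
abbrev Necklace (n : ℕ) [NeZero n] := Quotient (rotSetoid n)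

/-- The necklace of a word. -/
def nec (w : Word n) : Necklace n := Quotient.mk (rotSetoid n) w

/-- The number of `1`s in a word. -/
def wt (w : Word n) : ℕ := (Finset.univ.filter fun i => w i = true).card

/-- The number of `0`s in a word. -/
def zeros (w : Word n) : ℕ := (Finset.univ.filter fun i => w i = false).card

/-- The rank of a necklace: the number of `1`s in any representative. -/
noncomputable def rank (u : Necklace n) : ℕ := wt (Quotient.out u)

/-- The set of positions belonging to some pair of `M`. -/
def matchedPos (M : Finset (Fin n × Fin n)) : Finset (Fin n) :=
  M.image Prod.fst ∪ M.image Prod.snd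

/-- `j` is the first position outside `S` encountered strictly after `i` in the cyclic
order `i+1, i+2, …` (indices mod `n`). -/
def FirstAfter (S : Finset (Fin n)) (i j : Fin n) : Prop :=
  j ∉ S ∧ j ≠ i ∧ ∀ k : Fin n, k ∉ S → k ≠ i → (j - i).val ≤ (k - i).val

/-- One step of the cyclic matching procedure on the word `w`: choose an as-yet-unmatched
position `i` carrying the letter `0` such that the first as-yet-unmatched position `j`
after `i` in cyclic order carries the letter `1`, and declare `{i, j}` a matched pair
(recorded as the ordered pair `(i, j)`, the `0`-position first). -/
inductive MatchStep (w : Word n) :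
    Finset (Fin n × Fin n) → Finset (Fin n × Fin n) → Prop
  | step {M : Finset (Fin n × Fin n)} {i j : Fin n}
      (hi : i ∉ matchedPos M) (hw : w i = false)
      (hj : FirstAfter (matchedPos M) i j) (hj1 : w j = true) :
      MatchStep w M (insert (i, j) M)

/-- A maximal execution of the cyclic matching procedure on `w`, starting from the empty
matching: `M` is reachable from `∅` by matching steps and no further step is possible. -/
def IsMaximalMatching (w : Word n) (M : Finset (Fin n × Fin n)) : Prop :=
  Relation.ReflTransGen (MatchStep w) ∅ M ∧ ∀ M', ¬ MatchStep w M M'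

/-- The cyclic matching of `w`: the set of matched pairs produced by (any) maximal
execution of the cyclic matching procedure. -/
noncomputable def matching (w : Word n) : Finset (Fin n × Fin n) :=
  letI := Classical.dec (∃ M, IsMaximalMatching w M)
  if h : ∃ M, IsMaximalMatching w M then h.choose else ∅

/-- The unmatched positions of `w`: positions belonging to no matched pair. -/
noncomputable def unmatchedPos (w : Word n) : Finset (Fin n) :=
  Finset.univ \ matchedPos (matching w)

/-- Lexicographic comparison of words with respect to the letter order `1 ≺ 0`
(recall `true` encodes `1` and `false` encodes `0`). -/
def lexLE (w w' : Word n) : Prop :=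
  w = w' ∨ ∃ i : Fin n, (∀ j : Fin n, j < i → w j = w' j) ∧ w i = true ∧ w' i = false

/-- A word is Lyndon if it is lexicographically smallest among all of its rotations,
with respect to the letter order `1 ≺ 0`. -/
def IsLyndon (w : Word n) : Prop := ∀ i : Fin n, lexLE w (rot i w)

/-- The Lyndon rearrangement of `w`: its lexicographically smallest rotation. -/
noncomputable def lyndonOf (w : Word n) : Word n :=
  letI := Classical.dec (∃ i : Fin n, IsLyndon (rot i w))
  if h : ∃ i : Fin n, IsLyndon (rot i w) then rot h.choose w else w

/-- Change the letter at the rightmost unmatched position of `w` to `0`. -/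
noncomputable def flipTop (w : Word n) : Word n :=
  if h : (unmatchedPos w).Nonempty then
    Function.update w ((unmatchedPos w).max' h) false
  else w

/-- The map `φ`: take the Lyndon rearrangement of a representative and change the letter
at its rightmost unmatched position (which carries a `1` on the upper half of ranks)
to `0`. -/
noncomputable def phi (u : Necklace n) : Necklace n :=
  nec (flipTop (lyndonOf (Quotient.out u)))

/-- `x` lies strictly inside the cyclic arc running from `i` (exclusive) to `k`
(exclusive), in the cyclic order of positions. -/
def StrictBtw (i x k : Fin n) : Prop :=
  0 < (x - i).val ∧ (x - i).val < (k - i).val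

/-- The pairs `{i, k}` and `{j, l}` cross: exactly one of `j, l` lies strictly inside one
of the two cyclic arcs determined by `i` and `k`. -/
def Crosses (i k j l : Fin n) : Prop := Xor' (StrictBtw i j k) (StrictBtw i l k)

/-- `wT w t` is the word obtained from `w` by changing the letters at the last `t`
unmatched positions of `w` to `0`; that is, if the unmatched positions of `w` are
`p₁ < … < p_m`, the positions `p_{m-t+1}, …, p_m` are changed to `0`. -/
noncomputable def wT (w : Word n) (t : ℕ) : Word n := fun j =>
  if j ∈ unmatchedPos w ∧ ((unmatchedPos w).filter fun k => j ≤ k).card ≤ t then false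
  else w j

/-- The order on necklaces (the poset `Bₙ/Cₙ`): `u ≤ v` iff there are representatives
`w` of `u` and `w'` of `v` such that every position carrying `1` in `w` also carries `1`
in `w'`. -/
def nle (u v : Necklace n) : Prop :=
  ∃ w w' : Word n, nec w = u ∧ nec w' = v ∧ ∀ i, w i = true → w' i = true

/-- The strict order on necklaces. -/
def nlt (u v : Necklace n) : Prop := nle u v ∧ u ≠ v

/-- `v` covers `u` in `Bₙ/Cₙ`: `u < v` and there is no `z` with `u < z < v`. -/
def ncovBy (u v : Necklace n) : Prop := nlt u v ∧ ∀ z, nlt u z → ¬ nlt z v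

/-- A chain top: a necklace `v` in the upper half of ranks (`2·rank v ≥ n`) which is not
the image under `φ` of any necklace in the strict upper half of ranks. -/
def IsChainTop (v : Necklace n) : Prop :=
  n ≤ 2 * rank v ∧ ∀ u : Necklace n, n < 2 * rank u → phi u ≠ v

/-- The `φ`-string below the chain top `v`: the necklaces of the words `w_t`,
`0 ≤ t ≤ m`, where `w` is the Lyndon representative of `v` and `m = 2·rank v − n`. -/
noncomputable def chainOf (v : Necklace n) : Set (Necklace n) :=
  { u | ∃ t ≤ 2 * rank v - n, u = nec (wT (lyndonOf (Quotient.out v)) t) }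

/-! ### Auxiliary development for Statement 11 -/

section Aux

set_option linter.unusedSectionVars false

variable {n : ℕ} [NeZero n]

/-- value of subtraction in `Fin n`. -/
lemma vsub (a b : Fin n) :
    (a - b).val = if b.val ≤ a.val then a.val - b.val else a.val + n - b.val := by
  have hn : 0 < n := Nat.pos_of_ne_zero (NeZero.ne n)
  have ha : a.val < n := a.isLt
  have hb : b.val < n := b.isLt
  rw [Fin.sub_def]
  simp only []
  split_ifs with h
  · have h2 : n - b.val + a.val = (a.val - b.val) + n := by omega
    rw [h2, Nat.add_mod_right, Nat.mod_eq_of_lt (by omega)]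
  · have h2 : n - b.val + a.val < n := by omega
    rw [Nat.mod_eq_of_lt h2]
    omega

lemma fin_val_eq {a b : Fin n} (h : a.val = b.val) : a = b := Fin.ext h

lemma sub_inj {a b c : Fin n} (h : a - c = b - c) : a = b := by
  have := congrArg (· + c) h
  simpa using this

lemma rot_zero (w : Word n) : rot 0 w = w := by
  funext j; simp [rot]

lemma rot_neg_rot (c : Fin n) (w : Word n) : rot (-c) (rot c w) = w := by
  rw [rot_rot]; simp [rot_zero]

lemma rot_apply_add (c : Fin n) (w : Word n) (i : Fin n) : rot c w (i + c) = w i := by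
  simp [rot]

/-- shifting a set of pairs -/
def pshift (c : Fin n) (M : Finset (Fin n × Fin n)) : Finset (Fin n × Fin n) :=
  M.image fun p => (p.1 + c, p.2 + c)

lemma mem_pshift {c : Fin n} {M : Finset (Fin n × Fin n)} {a b : Fin n} :
    (a, b) ∈ pshift c M ↔ (a - c, b - c) ∈ M := by
  constructor
  · rintro h
    obtain ⟨⟨x, y⟩, hxy, he⟩ := Finset.mem_image.1 h
    obtain ⟨h1, h2⟩ := Prod.mk.injEq .. ▸ he
    simpa [← h1, ← h2] using hxy
  · intro h
    exact Finset.mem_image.2 ⟨(a - c, b - c), h, by simp⟩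

lemma pshift_mem {c : Fin n} {M : Finset (Fin n × Fin n)} {a b : Fin n} (h : (a, b) ∈ M) :
    (a + c, b + c) ∈ pshift c M := Finset.mem_image.2 ⟨(a, b), h, rfl⟩

lemma matchedPos_pshift (c : Fin n) (M : Finset (Fin n × Fin n)) :
    matchedPos (pshift c M) = (matchedPos M).image (· + c) := by
  ext z
  simp only [matchedPos, pshift, Finset.mem_union, Finset.mem_image, Finset.image_image]
  constructor
  · rintro (⟨p, hp, rfl⟩ | ⟨p, hp, rfl⟩)
    · exact ⟨p.1, Or.inl ⟨p, hp, rfl⟩, rfl⟩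
    · exact ⟨p.2, Or.inr ⟨p, hp, rfl⟩, rfl⟩
  · rintro ⟨z, (⟨p, hp, rfl⟩ | ⟨p, hp, rfl⟩), rfl⟩
    · exact Or.inl ⟨p, hp, rfl⟩
    · exact Or.inr ⟨p, hp, rfl⟩

lemma mem_matchedPos {M : Finset (Fin n × Fin n)} {z : Fin n} :
    z ∈ matchedPos M ↔ ∃ p ∈ M, p.1 = z ∨ p.2 = z := by
  simp only [matchedPos, Finset.mem_union, Finset.mem_image]
  constructor
  · rintro (⟨p, hp, rfl⟩ | ⟨p, hp, rfl⟩)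
    exacts [⟨p, hp, Or.inl rfl⟩, ⟨p, hp, Or.inr rfl⟩]
  · rintro ⟨p, hp, (rfl | rfl)⟩
    exacts [Or.inl ⟨p, hp, rfl⟩, Or.inr ⟨p, hp, rfl⟩]

lemma matchedPos_insert (p : Fin n × Fin n) (M : Finset (Fin n × Fin n)) :
    matchedPos (insert p M) = insert p.1 (insert p.2 (matchedPos M)) := by
  ext z
  simp only [mem_matchedPos, Finset.mem_insert]
  constructor
  · rintro ⟨q, (rfl | hq), h⟩
    · rcases h with rfl | rfl
      · exact Or.inl rfl
      · exact Or.inr (Or.inl rfl)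
    · exact Or.inr (Or.inr ⟨q, hq, h⟩)
  · rintro (rfl | rfl | h)
    · exact ⟨p, Or.inl rfl, Or.inl rfl⟩
    · exact ⟨p, Or.inl rfl, Or.inr rfl⟩
    · obtain ⟨q, hq, h2⟩ := h
      exact ⟨q, Or.inr hq, h2⟩

lemma matchedPos_union (M N : Finset (Fin n × Fin n)) :
    matchedPos (M ∪ N) = matchedPos M ∪ matchedPos N := by
  ext z
  simp only [mem_matchedPos, Finset.mem_union]
  constructor
  · rintro ⟨p, (hp | hp), h⟩
    exacts [Or.inl ⟨p, hp, h⟩, Or.inr ⟨p, hp, h⟩]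
  · rintro (⟨p, hp, h⟩ | ⟨p, hp, h⟩)
    exacts [⟨p, Or.inl hp, h⟩, ⟨p, Or.inr hp, h⟩]

/-- The key invariants of matchings reachable from `∅`. -/
structure Good (w : Word n) (M : Finset (Fin n × Fin n)) : Prop where
  letters : ∀ p ∈ M, w p.1 = false ∧ w p.2 = true
  ne : ∀ p ∈ M, p.1 ≠ p.2
  disj : ∀ p ∈ M, ∀ q ∈ M, p ≠ q → p.1 ≠ q.1 ∧ p.1 ≠ q.2 ∧ p.2 ≠ q.1 ∧ p.2 ≠ q.2
  avoid : ∀ p ∈ M, ∀ z, z ∉ matchedPos M → ¬ ((z - p.1).val ≤ (p.2 - p.1).val)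

lemma good_empty (w : Word n) : Good w ∅ := by
  constructor <;> simp

lemma Good.step {w : Word n} {M N : Finset (Fin n × Fin n)}
    (hg : Good w M) (hs : MatchStep w M N) : Good w N := by
  obtain ⟨hi, hw, hj, hj1⟩ := hs
  rename_i i j
  obtain ⟨hjS, hji, hjmin⟩ := hj
  have hij : i ≠ j := fun h => by rw [h, hj1] at hw; simp at hw
  have hcomp : ∀ p ∈ M, p.1 ∈ matchedPos M ∧ p.2 ∈ matchedPos M := fun p hp =>
    ⟨mem_matchedPos.2 ⟨p, hp, Or.inl rfl⟩, mem_matchedPos.2 ⟨p, hp, Or.inr rfl⟩⟩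
  constructor
  · intro p hp
    rcases Finset.mem_insert.1 hp with rfl | hp
    · exact ⟨hw, hj1⟩
    · exact hg.letters p hp
  · intro p hp
    rcases Finset.mem_insert.1 hp with rfl | hp
    · exact hij
    · exact hg.ne p hp
  · intro p hp q hq hpq
    rcases Finset.mem_insert.1 hp with rfl | hp <;> rcases Finset.mem_insert.1 hq with rfl | hq
    · exact absurd rfl hpq
    · obtain ⟨h1, h2⟩ := hcomp q hq
      refine ⟨fun h => hi ?_, fun h => hi ?_, fun h => hjS ?_, fun h => hjS ?_⟩
      · rw [show i = q.1 from h]; exact h1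
      · rw [show i = q.2 from h]; exact h2
      · rw [show j = q.1 from h]; exact h1
      · rw [show j = q.2 from h]; exact h2
    · obtain ⟨h1, h2⟩ := hcomp p hp
      refine ⟨fun h => hi ?_, fun h => hjS ?_, fun h => hi ?_, fun h => hjS ?_⟩
      · rw [show i = p.1 from h.symm]; exact h1
      · rw [show j = p.1 from h.symm]; exact h1
      · rw [show i = p.2 from h.symm]; exact h2
      · rw [show j = p.2 from h.symm]; exact h2
    · exact hg.disj p hp q hq hpq
  · intro p hp z hz hcon
    have hzM : z ∉ matchedPos M := fun h => hz (by
      rw [matchedPos_insert]; exact Finset.mem_insert.2 (Or.inr (Finset.mem_insert.2 (Or.inr h))))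
    have hzi : z ≠ i := fun h => hz (by rw [matchedPos_insert, h]; simp)
    have hzj : z ≠ j := fun h => hz (by rw [matchedPos_insert, h]; simp)
    rcases Finset.mem_insert.1 hp with rfl | hp
    · simp only at hcon
      have := hjmin z hzM hzi
      have heq : (z - i).val = (j - i).val := le_antisymm hcon this
      exact hzj (sub_inj (fin_val_eq heq))
    · exact hg.avoid p hp z hzM hcon

lemma good_of_reachable {w : Word n} {M : Finset (Fin n × Fin n)}
    (h : Relation.ReflTransGen (MatchStep w) ∅ M) : Good w M := by
  induction h with
  | refl => exact good_empty w
  | tail _ hstep ih => exact ih.step hstep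

end Aux
section Aux2

set_option linter.unusedSectionVars false

variable {n : ℕ} [NeZero n]

lemma MatchStep.card_lt {w : Word n} {M N : Finset (Fin n × Fin n)}
    (h : MatchStep w M N) : M.card < N.card := by
  obtain ⟨hi, hw, hj, hj1⟩ := h
  rename_i i j
  have : (i, j) ∉ M := fun hm => hi (mem_matchedPos.2 ⟨(i, j), hm, Or.inl rfl⟩)
  rw [Finset.card_insert_of_notMem this]
  omega

lemma exists_maximal_matching (w : Word n) : ∃ M, IsMaximalMatching w M := by
  by_contra hcon
  push_neg at hcon
  have key : ∀ j : ℕ, ∃ M, Relation.ReflTransGen (MatchStep w) ∅ M ∧ j ≤ M.card := by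
    intro j
    induction j with
    | zero => exact ⟨∅, Relation.ReflTransGen.refl, Nat.zero_le _⟩
    | succ j ih =>
      obtain ⟨M, hM, hc⟩ := ih
      obtain ⟨M', hM'⟩ := not_forall.1 fun hall => (hcon M ⟨hM, hall⟩)
      push_neg at hM'
      exact ⟨M', hM.tail hM', by have := hM'.card_lt; omega⟩
  obtain ⟨M, _, hc⟩ := key (Fintype.card (Fin n × Fin n) + 1)
  have := (Finset.card_le_univ M).trans_eq Finset.card_univ
  omega

lemma matching_isMaximal (w : Word n) : IsMaximalMatching w (matching w) := by
  rw [matching]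
  rw [dif_pos (exists_maximal_matching w)]
  exact (exists_maximal_matching w).choose_spec

/-- strong confluence (diamond, up to equality) of the matching procedure. -/
lemma matchStep_diamond {w : Word n} {M M1 M2 : Finset (Fin n × Fin n)}
    (h1 : MatchStep w M M1) (h2 : MatchStep w M M2) :
    M1 = M2 ∨ ∃ M3, MatchStep w M1 M3 ∧ MatchStep w M2 M3 := by
  obtain ⟨hi, hw, hj, hj1⟩ := h1
  rename_i i j
  obtain ⟨hi', hw', hj', hj1'⟩ := h2
  rename_i i' j'
  obtain ⟨hjS, hji, hjmin⟩ := hj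
  obtain ⟨hjS', hji', hjmin'⟩ := hj'
  by_cases hii : i = i'
  · subst hii
    have e1 : (j - i).val ≤ (j' - i).val := hjmin j' hjS' hji'
    have e2 : (j' - i).val ≤ (j - i).val := hjmin' j hjS hji
    have : j = j' := sub_inj (fin_val_eq (le_antisymm e1 e2))
    subst this
    exact Or.inl rfl
  · -- the two pairs are disjoint
    have hij : i ≠ j := fun h => by rw [h, hj1] at hw; simp at hw
    have hij' : i' ≠ j' := fun h => by rw [h, hj1'] at hw'; simp at hw'
    have hij2 : i ≠ j' := fun h => by rw [h, hj1'] at hw; simp at hw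
    have hij2' : i' ≠ j := fun h => by rw [h, hj1] at hw'; simp at hw'
    have hjj : j ≠ j' := by
      intro h
      subst h
      -- contradiction via minimality
      have e1 : (j - i).val ≤ (i' - i).val := hjmin i' hi' (Ne.symm hii)
      have e2 : (j - i').val ≤ (i - i').val := hjmin' i hi hii
      have hA : (i' - i).val ≠ 0 := by
        intro h0
        have : i' - i = 0 := fin_val_eq (by simpa using h0)
        exact hii (by have := sub_eq_zero.1 this; exact this.symm)
      have hB : (j - i).val ≠ (i' - i).val := by
        intro h0
        exact hij2' (sub_inj (fin_val_eq h0)).symm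
      have hji0 : (j - i).val ≠ 0 := by
        intro h0
        have : j - i = 0 := fin_val_eq (by simpa using h0)
        exact hij (by have := sub_eq_zero.1 this; exact this.symm)
      have hiv := i.isLt
      have hiv' := i'.isLt
      have hjv := j.isLt
      simp only [vsub] at e1 e2 hA hB hji0
      split_ifs at e1 e2 hA hB hji0 <;> omega
    refine Or.inr ⟨insert (i', j') (insert (i, j) M), ?_, ?_⟩
    · -- step (i',j') from insert (i,j) M
      have hS : matchedPos (insert (i, j) M) = insert i (insert j (matchedPos M)) :=
        matchedPos_insert _ _
      refine MatchStep.step ?_ hw' ⟨?_, hji', ?_⟩ hj1'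
      · rw [hS]
        simp only [Finset.mem_insert]
        push_neg
        exact ⟨Ne.symm hii, hij2', hi'⟩
      · rw [hS]
        simp only [Finset.mem_insert]
        push_neg
        exact ⟨Ne.symm hij2, Ne.symm hjj, hjS'⟩
      · intro k hk hki
        rw [hS] at hk
        simp only [Finset.mem_insert] at hk
        push_neg at hk
        exact hjmin' k hk.2.2 hki
    · -- step (i,j) from insert (i',j') M, then sets are equal
      have hS : matchedPos (insert (i', j') M) = insert i' (insert j' (matchedPos M)) :=
        matchedPos_insert _ _
      have : insert (i', j') (insert (i, j) M) = insert (i, j) (insert (i', j') M) := by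
        rw [Finset.insert_comm]
      rw [this]
      refine MatchStep.step ?_ hw ⟨?_, hji, ?_⟩ hj1
      · rw [hS]
        simp only [Finset.mem_insert]
        push_neg
        exact ⟨hii, hij2, hi⟩
      · rw [hS]
        simp only [Finset.mem_insert]
        push_neg
        exact ⟨Ne.symm hij2', hjj, hjS⟩
      · intro k hk hki
        rw [hS] at hk
        simp only [Finset.mem_insert] at hk
        push_neg at hk
        exact hjmin k hk.2.2 hki

lemma maximal_matching_unique {w : Word n} {M1 M2 : Finset (Fin n × Fin n)}
    (h1 : IsMaximalMatching w M1) (h2 : IsMaximalMatching w M2) : M1 = M2 := by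
  have cr : ∀ (a b c : Finset (Fin n × Fin n)), MatchStep w a b → MatchStep w a c →
      ∃ d, Relation.ReflGen (MatchStep w) b d ∧
        Relation.ReflTransGen (MatchStep w) c d := by
    intro a b c hab hac
    rcases matchStep_diamond hab hac with rfl | ⟨d, hbd, hcd⟩
    · exact ⟨b, Relation.ReflGen.refl, Relation.ReflTransGen.refl⟩
    · exact ⟨d, Relation.ReflGen.single hbd, Relation.ReflTransGen.single hcd⟩
  obtain ⟨d, hd1, hd2⟩ := Relation.church_rosser cr h1.1 h2.1
  have stuck : ∀ {M : Finset (Fin n × Fin n)}, (∀ M', ¬ MatchStep w M M') →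
      ∀ {N}, Relation.ReflTransGen (MatchStep w) M N → M = N := by
    intro M hM N hMN
    rcases hMN.cases_head with h | ⟨c, hc, _⟩
    · exact h
    · exact absurd hc (hM c)
  rw [stuck h1.2 hd1, stuck h2.2 hd2]

end Aux2
section Aux3

open Fin.CommRing

set_option linter.unusedSectionVars false

variable {n : ℕ} [NeZero n]

lemma pshift_pshift (c d : Fin n) (M : Finset (Fin n × Fin n)) :
    pshift d (pshift c M) = pshift (c + d) M := by
  unfold pshift
  rw [Finset.image_image]
  congr 1
  funext p
  simp [add_assoc]

lemma pshift_zero (M : Finset (Fin n × Fin n)) : pshift 0 M = M := by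
  unfold pshift
  rw [show (fun p : Fin n × Fin n => (p.1 + 0, p.2 + 0)) = id by funext p; simp]
  exact Finset.image_id

lemma matchStep_shift {w : Word n} {M N : Finset (Fin n × Fin n)} (c : Fin n)
    (h : MatchStep w M N) : MatchStep (rot c w) (pshift c M) (pshift c N) := by
  obtain ⟨hi, hw, hj, hj1⟩ := h
  rename_i i j
  obtain ⟨hjS, hji, hjmin⟩ := hj
  have himg : ∀ z : Fin n, z ∈ matchedPos M ↔ z + c ∈ matchedPos (pshift c M) := by
    intro z
    rw [matchedPos_pshift]
    constructor
    · intro hz; exact Finset.mem_image.2 ⟨z, hz, rfl⟩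
    · intro hz
      obtain ⟨y, hy, he⟩ := Finset.mem_image.1 hz
      rwa [show y = z from by have := congrArg (· - c) he; simpa using this] at hy
  have hins : pshift c (insert (i, j) M) = insert (i + c, j + c) (pshift c M) := by
    unfold pshift; rw [Finset.image_insert]
  rw [hins]
  refine MatchStep.step (fun hmem => hi ((himg i).2 hmem)) ?_ ⟨?_, ?_, ?_⟩ ?_
  · rw [rot_apply_add]; exact hw
  · exact fun hmem => hjS ((himg j).2 hmem)
  · intro he
    exact hji (by have := congrArg (· - c) he; simpa using this)
  · intro k hk hki
    have h1 : (j + c - (i + c)) = j - i := by ring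
    have h2 : (k - (i + c)) = (k - c) - i := by ring
    rw [h1, h2]
    refine hjmin (k - c) (fun hm => hk ?_) (fun he => hki ?_)
    · have := (himg (k - c)).1 hm
      simpa using this
    · rw [← he, sub_add_cancel]
  · rw [rot_apply_add]; exact hj1

lemma reachable_shift {w : Word n} {M : Finset (Fin n × Fin n)} (c : Fin n)
    (h : Relation.ReflTransGen (MatchStep w) ∅ M) :
    Relation.ReflTransGen (MatchStep (rot c w)) ∅ (pshift c M) := by
  induction h with
  | refl =>
      have h0 : pshift c (∅ : Finset (Fin n × Fin n)) = ∅ := by simp [pshift]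
      rw [h0]
  | tail _ hstep ih => exact ih.tail (matchStep_shift c hstep)

lemma isMaximal_shift {w : Word n} {M : Finset (Fin n × Fin n)} (c : Fin n)
    (h : IsMaximalMatching w M) : IsMaximalMatching (rot c w) (pshift c M) := by
  refine ⟨reachable_shift c h.1, ?_⟩
  intro M' hM'
  have := matchStep_shift (-c) hM'
  rw [pshift_pshift, add_neg_cancel, pshift_zero, rot_neg_rot] at this
  exact h.2 _ this

lemma card_matchedPos {w : Word n} {M : Finset (Fin n × Fin n)} (hg : Good w M) :
    (matchedPos M).card = 2 * M.card := by
  have hinj1 : Set.InjOn Prod.fst (M : Set ((Fin n) × (Fin n))) := by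
    intro p hp q hq he
    by_contra hne
    exact (hg.disj p hp q hq hne).1 he
  have hinj2 : Set.InjOn Prod.snd (M : Set ((Fin n) × (Fin n))) := by
    intro p hp q hq he
    by_contra hne
    exact (hg.disj p hp q hq hne).2.2.2 he
  have hdisj : Disjoint (M.image Prod.fst) (M.image Prod.snd) := by
    rw [Finset.disjoint_left]
    intro z h1 h2
    obtain ⟨p, hp, rfl⟩ := Finset.mem_image.1 h1
    obtain ⟨q, hq, he⟩ := Finset.mem_image.1 h2
    by_cases hpq : p = q
    · subst hpq; exact hg.ne p hp he.symm
    · exact (hg.disj q hq p hp (Ne.symm hpq)).2.2.1 he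
  rw [matchedPos, Finset.card_union_of_disjoint hdisj,
    Finset.card_image_of_injOn hinj1, Finset.card_image_of_injOn hinj2]
  omega

lemma card_unmatchedPos (w : Word n) :
    (unmatchedPos w).card = n - 2 * (matching w).card := by
  rw [unmatchedPos, Finset.card_sdiff_of_subset (Finset.subset_univ _), Finset.card_univ,
    Fintype.card_fin, card_matchedPos (good_of_reachable (matching_isMaximal w).1)]

lemma mem_unmatchedPos {w : Word n} {z : Fin n} :
    z ∈ unmatchedPos w ↔ z ∉ matchedPos (matching w) := by
  simp [unmatchedPos]

lemma wt_rot (c : Fin n) (w : Word n) : wt (rot c w) = wt w := by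
  unfold wt
  refine Finset.card_bij' (fun a _ => a - c) (fun a _ => a + c) ?_ ?_ ?_ ?_
  · intro a ha
    simp only [Finset.mem_filter, Finset.mem_univ, true_and] at ha ⊢
    exact ha
  · intro a ha
    simp only [Finset.mem_filter, Finset.mem_univ, true_and] at ha ⊢
    rw [show rot c w (a + c) = w a from rot_apply_add c w a]
    exact ha
  · intro a _
    simp only [sub_add_cancel]
  · intro a _
    simp only [add_sub_cancel_right]

lemma nec_rot (c : Fin n) (w : Word n) : nec (rot c w) = nec w :=
  (Quotient.sound ⟨c, rfl⟩ : nec w = nec (rot c w)).symm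

lemma rank_nec (x : Word n) : rank (nec x) = wt x := by
  have h : ⟦(nec x).out⟧ = nec x := Quotient.out_eq _
  have h2 : (rotSetoid n).r (nec x).out x := Quotient.exact h
  obtain ⟨c, hc⟩ := h2
  rw [rank, ← wt_rot c ((nec x).out), hc]

lemma zeros_eq (w : Word n) : zeros w = n - wt w := by
  have : zeros w + wt w = n := by
    rw [zeros, wt, ← Finset.card_union_of_disjoint]
    · have he : (Finset.univ.filter fun i => w i = false) ∪
          (Finset.univ.filter fun i => w i = true) = Finset.univ := by
        ext z
        simp only [Finset.mem_union, Finset.mem_filter, Finset.mem_univ, true_and]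
        rcases Bool.dichotomy (w z) with h | h <;> simp [h]
      rw [he, Finset.card_univ, Fintype.card_fin]
    · rw [Finset.disjoint_left]
      intro z h1 h2
      simp only [Finset.mem_filter] at h1 h2
      rw [h1.2] at h2
      exact Bool.false_ne_true h2.2
  omega

end Aux3
section Aux4

set_option linter.unusedSectionVars false

variable {n : ℕ} [NeZero n]

lemma all_unmatched_true {w : Word n} {k : ℕ} (hwt : wt w = k) (hk : n < 2 * k)
    (hm : (unmatchedPos w).card = 2 * k - n) : ∀ z ∈ unmatchedPos w, w z = true := by
  have hg := good_of_reachable (matching_isMaximal w).1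
  have hcard := card_unmatchedPos w
  have hmp := card_matchedPos hg
  have hmple : (matchedPos (matching w)).card ≤ n := by
    have := Finset.card_le_univ (matchedPos (matching w))
    rwa [Fintype.card_fin] at this
  have hkn : k ≤ n := by
    by_contra hc
    push_neg at hc
    have h1 : wt w ≤ n := by
      have := Finset.card_le_univ (Finset.univ.filter fun i => w i = true)
      rwa [Fintype.card_fin] at this
    omega
  have hAcard : (matching w).card = n - k := by omega
  have hzeros : zeros w = n - k := by rw [zeros_eq, hwt]
  -- the fst components of the matching are exactly the zero positions
  have hsub : (matching w).image Prod.fst ⊆ Finset.univ.filter (fun i => w i = false) := by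
    intro z hz
    obtain ⟨p, hp, rfl⟩ := Finset.mem_image.1 hz
    simp only [Finset.mem_filter, Finset.mem_univ, true_and]
    exact (hg.letters p hp).1
  have hinj : Set.InjOn Prod.fst ((matching w) : Set (Fin n × Fin n)) := by
    intro p hp q hq he
    by_contra hne
    exact (hg.disj p hp q hq hne).1 he
  have hcards : ((matching w).image Prod.fst).card =
      (Finset.univ.filter (fun i => w i = false)).card := by
    rw [Finset.card_image_of_injOn hinj, hAcard]
    have : (Finset.univ.filter (fun i => w i = false)).card = zeros w := rfl
    rw [this, hzeros]
  have heq := Finset.eq_of_subset_of_card_le hsub (le_of_eq hcards.symm)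
  intro z hz
  rcases Bool.dichotomy (w z) with h | h
  · exfalso
    have hzf : z ∈ Finset.univ.filter (fun i => w i = false) := by
      simp only [Finset.mem_filter, Finset.mem_univ, true_and]; exact h
    rw [← heq] at hzf
    obtain ⟨p, hp, rfl⟩ := Finset.mem_image.1 hzf
    exact (mem_unmatchedPos.1 hz) (mem_matchedPos.2 ⟨p, hp, Or.inl rfl⟩)
  · exact h

lemma wT_apply_not_unmatched {w : Word n} {r : ℕ} {z : Fin n} (hz : z ∉ unmatchedPos w) :
    wT w r z = w z := by
  rw [wT]
  exact if_neg (fun h => hz h.1)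

/-- The main structure lemma: the explicit maximal matching of `wT w r`. -/
lemma structure_main {w : Word n} {m r : ℕ} (hm : (unmatchedPos w).card = m)
    (hone : ∀ z ∈ unmatchedPos w, w z = true) (hr : r ≤ m) (hm0 : 0 < m) :
    ∃ (P : ℕ → Fin n) (S : Finset (Fin n × Fin n)),
      S = (Finset.range (min r (m - r))).image (fun t => (P (m - 1 - t), P t))
      ∧ (∀ i j, i < j → j < m → (P i).val < (P j).val)
      ∧ (∀ i, i < m → P i ∈ unmatchedPos w)
      ∧ (∀ z ∈ unmatchedPos w, ∃ τ, τ < m ∧ P τ = z)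
      ∧ (∀ i, i < m → w (P i) = true)
      ∧ (∀ i, i < m → m - r ≤ i → wT w r (P i) = false)
      ∧ (∀ i, i < m → i < m - r → wT w r (P i) = true)
      ∧ IsMaximalMatching (wT w r) (matching w ∪ S)
      ∧ (∀ z, z ∉ matchedPos (matching w ∪ S) →
          ∃ τ, min r (m - r) ≤ τ ∧ τ < m - min r (m - r) ∧ P τ = z)
      ∧ (∀ τ, min r (m - r) ≤ τ → τ < m - min r (m - r) →
          P τ ∉ matchedPos (matching w ∪ S)) := by
  set s := min r (m - r) with hs
  have hs2 : 2 * s ≤ m := by omega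
  set U := unmatchedPos w with hU
  set x := wT w r with hx
  -- sorted enumeration of U
  set iso := U.orderIsoOfFin hm with hiso
  set P : ℕ → Fin n := fun i => (iso ⟨i % m, Nat.mod_lt i hm0⟩ : Fin n) with hP
  have hPdef : ∀ i (h : i < m), P i = (iso ⟨i, h⟩ : Fin n) := by
    intro i h
    simp only [hP]
    congr 2
    exact Fin.ext (Nat.mod_eq_of_lt h)
  have hmono : ∀ i j, i < j → j < m → (P i).val < (P j).val := by
    intro i j hij hj
    rw [hPdef i (hij.trans hj), hPdef j hj]
    have : (⟨i, hij.trans hj⟩ : Fin m) < ⟨j, hj⟩ := hij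
    exact (iso.strictMono this : _)
  have hmem : ∀ i, i < m → P i ∈ U := by
    intro i h
    rw [hPdef i h]
    exact (iso ⟨i, h⟩).2
  have hsurj : ∀ z ∈ U, ∃ τ, τ < m ∧ P τ = z := by
    intro z hz
    refine ⟨(iso.symm ⟨z, hz⟩ : Fin m), (iso.symm ⟨z, hz⟩).isLt, ?_⟩
    rw [hPdef _ (iso.symm ⟨z, hz⟩).isLt]
    have : iso ⟨(iso.symm ⟨z, hz⟩ : Fin m), (iso.symm ⟨z, hz⟩).isLt⟩ = ⟨z, hz⟩ := by
      rw [show (⟨(iso.symm ⟨z, hz⟩ : Fin m), (iso.symm ⟨z, hz⟩).isLt⟩ : Fin m)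
          = iso.symm ⟨z, hz⟩ from Fin.ext rfl]
      exact iso.apply_symm_apply _
    rw [this]
  have hPinj : ∀ i j, i < m → j < m → P i = P j → i = j := by
    intro i j hi hj he
    rcases Nat.lt_trichotomy i j with h | h | h
    · exact absurd (he ▸ hmono i j h hj) (lt_irrefl _)
    · exact h
    · exact absurd (he ▸ hmono j i h hi) (by omega)
  have hones : ∀ i, i < m → w (P i) = true := fun i h => hone _ (hmem i h)
  -- tail count
  have htail : ∀ i, i < m → (U.filter (fun z => P i ≤ z)).card = m - i := by
    intro i hi
    have himg : U.filter (fun z => P i ≤ z) = (Finset.Ico i m).image P := by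
      ext z
      simp only [Finset.mem_filter, Finset.mem_image, Finset.mem_Ico]
      constructor
      · rintro ⟨hzU, hle⟩
        obtain ⟨τ, hτ, rfl⟩ := hsurj z hzU
        refine ⟨τ, ⟨?_, hτ⟩, rfl⟩
        by_contra hcon
        push_neg at hcon
        exact absurd (hmono τ i hcon hi) (by
          have : (P i).val ≤ (P τ).val := hle
          omega)
      · rintro ⟨τ, ⟨hiτ, hτ⟩, rfl⟩
        refine ⟨hmem τ hτ, ?_⟩
        rcases Nat.eq_or_lt_of_le hiτ with rfl | hlt
        · exact le_refl _
        · exact le_of_lt (hmono i τ hlt hτ)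
    rw [himg, Finset.card_image_of_injOn (fun a ha b hb he =>
      hPinj a b (Finset.mem_Ico.1 ha).2 (Finset.mem_Ico.1 hb).2 he), Nat.card_Ico]
  have hletters : ∀ i, i < m → (x (P i) = if m - r ≤ i then false else true) := by
    intro i hi
    rw [hx, wT]
    by_cases hc : m - r ≤ i
    · rw [if_pos hc, if_pos]
      refine ⟨hmem i hi, ?_⟩
      rw [htail i hi]
      omega
    · rw [if_neg hc, if_neg, hones i hi]
      rintro ⟨-, hcard⟩
      rw [htail i hi] at hcard
      omega
  have hlf : ∀ i, i < m → m - r ≤ i → x (P i) = false := by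
    intro i h1 h2; rw [hletters i h1, if_pos h2]
  have hlt : ∀ i, i < m → i < m - r → x (P i) = true := by
    intro i h1 h2; rw [hletters i h1, if_neg (by omega)]
  set S : Finset (Fin n × Fin n) :=
    (Finset.range s).image (fun t => (P (m - 1 - t), P t)) with hS
  -- agreement of x and w off U
  have hagree : ∀ z, z ∉ U → x z = w z := fun z hz => wT_apply_not_unmatched hz
  have hmatchA : ∀ z, z ∈ matchedPos (matching w) ↔ z ∉ U := by
    intro z
    rw [hU, mem_unmatchedPos]
    tauto
  -- A-derivation transports to x
  have htrans : ∀ N, Relation.ReflTransGen (MatchStep w) ∅ N → N ⊆ matching w →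
      Relation.ReflTransGen (MatchStep x) ∅ N := by
    intro N hN
    induction hN with
    | refl => intro _; exact Relation.ReflTransGen.refl
    | @tail b c hab hbc ih =>
      intro hsub
      obtain ⟨hi, hw, hj, hj1⟩ := hbc
      rename_i i j
      have hbsub : b ⊆ matching w := by
        refine Finset.Subset.trans ?_ hsub
        intro p hp
        exact Finset.mem_insert_of_mem hp
      have hiA : (i, j) ∈ matching w := hsub (Finset.mem_insert_self _ _)
      have hiU : i ∉ U := by
        rw [← hmatchA]
        exact mem_matchedPos.2 ⟨(i, j), hiA, Or.inl rfl⟩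
      have hjU : j ∉ U := by
        rw [← hmatchA]
        exact mem_matchedPos.2 ⟨(i, j), hiA, Or.inr rfl⟩
      exact (ih hbsub).tail (MatchStep.step hi (by rw [hagree i hiU]; exact hw) hj
        (by rw [hagree j hjU]; exact hj1))
  -- matchedPos of partial seams
  have hmp : ∀ t : ℕ, ∀ z, z ∈ matchedPos (matching w ∪
      (Finset.range t).image (fun t' => (P (m - 1 - t'), P t'))) ↔
      (z ∉ U ∨ ∃ t', t' < t ∧ (z = P (m - 1 - t') ∨ z = P t')) := by
    intro t z
    rw [matchedPos_union, Finset.mem_union, hmatchA]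
    constructor
    · rintro (h | h)
      · exact Or.inl h
      · obtain ⟨p, hp, hzp⟩ := mem_matchedPos.1 h
        obtain ⟨t', ht', he⟩ := Finset.mem_image.1 hp
        rw [Finset.mem_range] at ht'
        refine Or.inr ⟨t', ht', ?_⟩
        rcases hzp with h2 | h2 <;> rw [← h2, ← he]
        · exact Or.inl rfl
        · exact Or.inr rfl
    · rintro (h | ⟨t', ht', h⟩)
      · exact Or.inl h
      · refine Or.inr (mem_matchedPos.2 ⟨(P (m - 1 - t'), P t'),
          Finset.mem_image.2 ⟨t', Finset.mem_range.2 ht', rfl⟩, ?_⟩)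
        rcases h with rfl | rfl
        · exact Or.inl rfl
        · exact Or.inr rfl
  -- seam步 derivation
  have hseam : ∀ t, t ≤ s → Relation.ReflTransGen (MatchStep x) ∅
      (matching w ∪ (Finset.range t).image (fun t' => (P (m - 1 - t'), P t'))) := by
    intro t
    induction t with
    | zero =>
      intro _
      simp only [Finset.range_zero, Finset.image_empty, Finset.union_empty]
      exact htrans _ (matching_isMaximal w).1 (le_refl _)
    | succ t ih =>
      intro hts
      have hts' : t < s := hts
      have htm : t < m := by omega
      have htm1 : m - 1 - t < m := by omega
      have htlt : t < m - 1 - t := by omega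
      refine (ih (le_of_lt hts')).tail ?_
      have hnext : matching w ∪ (Finset.range (t+1)).image
          (fun t' => (P (m - 1 - t'), P t')) =
          insert (P (m - 1 - t), P t) (matching w ∪ (Finset.range t).image
            (fun t' => (P (m - 1 - t'), P t'))) := by
        rw [Finset.range_add_one, Finset.image_insert, Finset.union_comm (matching w),
          Finset.insert_union, Finset.union_comm]
      rw [hnext]
      have hinotm : P (m - 1 - t) ∉ matchedPos (matching w ∪ (Finset.range t).image
          (fun t' => (P (m - 1 - t'), P t'))) := by
        rw [hmp]
        push_neg
        refine ⟨hmem _ htm1, ?_⟩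
        intro t' ht'
        constructor
        · intro he
          have := hPinj _ _ htm1 (by omega) he
          omega
        · intro he
          have := hPinj _ _ htm1 (by omega) he
          omega
      have hjnotm : P t ∉ matchedPos (matching w ∪ (Finset.range t).image
          (fun t' => (P (m - 1 - t'), P t'))) := by
        rw [hmp]
        push_neg
        refine ⟨hmem _ htm, ?_⟩
        intro t' ht'
        constructor
        · intro he
          have := hPinj _ _ htm (by omega) he
          omega
        · intro he
          have := hPinj _ _ htm (by omega) he
          omega
      refine MatchStep.step hinotm (hlf _ htm1 (by omega)) ⟨hjnotm, ?_, ?_⟩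
        (hlt _ htm (by omega))
      · intro he
        have := hPinj _ _ htm htm1 he
        omega
      · -- minimality: first unmatched after P (m-1-t) is P t
        intro z hz hzi
        rw [hmp] at hz
        push_neg at hz
        obtain ⟨hzU, hz2⟩ := hz
        obtain ⟨τ, hτ, rfl⟩ := hsurj z hzU
        have hτlo : t ≤ τ := by
          by_contra hcon
          push_neg at hcon
          exact (hz2 τ hcon).2 rfl
        have hτhi : τ < m - 1 - t := by
          rcases Nat.lt_trichotomy τ (m - 1 - t) with h | h | h
          · exact h
          · exact absurd (congrArg P h) (fun he => hzi he)
          · exfalso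
            have ht' : m - 1 - τ < t := by omega
            exact (hz2 _ ht').1 (by
              congr 1
              omega)
        -- values : P τ < P (m-1-t), and P t ≤ P τ
        have h1 : (P τ).val < (P (m - 1 - t)).val := hmono τ _ hτhi htm1
        have h2 : (P t).val ≤ (P τ).val := by
          rcases Nat.eq_or_lt_of_le hτlo with rfl | h
          · exact le_refl _
          · exact le_of_lt (hmono t τ h (by omega))
        have h3 : (P t).val < (P (m - 1 - t)).val := hmono t _ htlt htm1
        rw [vsub, vsub]
        have := (P τ).isLt
        have := (P (m - 1 - t)).isLt
        split_ifs <;> omega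
  -- the full matching
  have hreach : Relation.ReflTransGen (MatchStep x) ∅ (matching w ∪ S) := hseam s (le_refl s)
  -- unmatched description
  have hunm : ∀ z, z ∉ matchedPos (matching w ∪ S) →
      ∃ τ, s ≤ τ ∧ τ < m - s ∧ P τ = z := by
    intro z hz
    rw [hS, hmp] at hz
    push_neg at hz
    obtain ⟨hzU, hz2⟩ := hz
    obtain ⟨τ, hτ, rfl⟩ := hsurj z hzU
    refine ⟨τ, ?_, ?_, rfl⟩
    · by_contra hcon
      push_neg at hcon
      exact (hz2 τ hcon).2 rfl
    · by_contra hcon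
      push_neg at hcon
      have ht' : m - 1 - τ < s := by omega
      refine (hz2 _ ht').1 ?_
      congr 1
      omega
  have hunm' : ∀ τ, s ≤ τ → τ < m - s → P τ ∉ matchedPos (matching w ∪ S) := by
    intro τ h1 h2 hcon
    rw [hS, hmp] at hcon
    rcases hcon with h | ⟨t', ht', h⟩
    · exact h (hmem τ (by omega))
    · rcases h with he | he
      · have := hPinj _ _ (by omega) (by omega) he
        omega
      · have := hPinj _ _ (by omega) (by omega) he
        omega
  -- maximality
  have hmax : ∀ M', ¬ MatchStep x (matching w ∪ S) M' := by
    intro M' hstep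
    obtain ⟨hi, hw, hj, hj1⟩ := hstep
    rename_i i j
    obtain ⟨τ, hτ1, hτ2, rfl⟩ := hunm i hi
    obtain ⟨τ', hτ1', hτ2', rfl⟩ := hunm j hj.1
    -- letters force a contradiction
    by_cases hcase : r ≤ m - r
    · -- s = r, all remaining unmatched positions carry 1
      have : x (P τ) = true := hlt τ (by omega) (by omega)
      rw [this] at hw
      simp at hw
    · -- s = m - r, all remaining carry 0
      have : x (P τ') = false := hlf τ' (by omega) (by omega)
      rw [this] at hj1
      exact Bool.false_ne_true hj1
  exact ⟨P, S, hS, hmono, hmem, hsurj, hones, hlf, hlt, ⟨hreach, hmax⟩, hunm, hunm'⟩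

end Aux4
section Aux5

open Fin.CommRing

set_option linter.unusedSectionVars false

variable {n : ℕ} [NeZero n]

/-- strict lexicographic comparison (`a` strictly smaller, i.e. `true ≺ false`). -/
def SLT (a b : Word n) : Prop :=
  ∃ i : Fin n, (∀ j : Fin n, j < i → a j = b j) ∧ a i = true ∧ b i = false

lemma SLT.irrefl (a : Word n) : ¬ SLT a a := by
  rintro ⟨i, -, h1, h2⟩
  rw [h1] at h2
  simp at h2

lemma SLT.trans {a b c : Word n} (h1 : SLT a b) (h2 : SLT b c) : SLT a c := by
  obtain ⟨i1, ha1, hb1, hc1⟩ := h1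
  obtain ⟨i2, ha2, hb2, hc2⟩ := h2
  rcases lt_trichotomy i1 i2 with h | h | h
  · exact ⟨i1, fun j hj => (ha1 j hj).trans (ha2 j (hj.trans h)), hb1,
      (ha2 i1 h).symm.trans hc1 ▸ rfl⟩
  · subst h
    exact ⟨i1, fun j hj => (ha1 j hj).trans (ha2 j hj), hb1, hc2⟩
  · refine ⟨i2, fun j hj => (ha1 j (hj.trans h)).trans (ha2 j hj), ?_, hc2⟩
    rw [ha1 i2 h, hb2]

lemma lexLE_SLT_trans {a b c : Word n} (h1 : lexLE a b) (h2 : SLT b c) : SLT a c := by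
  rcases h1 with rfl | h1
  · exact h2
  · exact SLT.trans h1 h2

lemma SLT_lexLE_trans {a b c : Word n} (h1 : SLT a b) (h2 : lexLE b c) : SLT a c := by
  rcases h2 with rfl | h2
  · exact h1
  · exact SLT.trans h1 h2

lemma mem_image_addc {Fs : Finset (Fin n)} {c z : Fin n} :
    z ∈ Fs.image (· + c) ↔ z - c ∈ Fs := by
  constructor
  · intro h
    obtain ⟨y, hy, rfl⟩ := Finset.mem_image.1 h
    simpa using hy
  · intro h
    exact Finset.mem_image.2 ⟨z - c, h, by simp [sub_add_cancel]⟩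

/-- The core seam-pinning lemma. -/
lemma lambda_core {w1 w2 : Word n} {m r : ℕ} {c : Fin n} {P Q : ℕ → Fin n}
    {S1 S2 : Finset (Fin n × Fin n)}
    (hm0 : 0 < m) (hr : r ≤ m)
    (hS1 : S1 = (Finset.range (min r (m - r))).image (fun t => (P (m - 1 - t), P t)))
    (hS2 : S2 = (Finset.range (min r (m - r))).image (fun t => (Q (m - 1 - t), Q t)))
    (hmono1 : ∀ i j, i < j → j < m → (P i).val < (P j).val)
    (hmono2 : ∀ i j, i < j → j < m → (Q i).val < (Q j).val)
    (hmem1 : ∀ i, i < m → P i ∈ unmatchedPos w1)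
    (hmem2 : ∀ i, i < m → Q i ∈ unmatchedPos w2)
    (hlt1 : ∀ i, i < m → i < m - r → wT w1 r (P i) = true)
    (hlf2 : ∀ i, i < m → m - r ≤ i → wT w2 r (Q i) = false)
    (hMax1 : IsMaximalMatching (wT w1 r) (matching w1 ∪ S1))
    (hMax2 : IsMaximalMatching (wT w2 r) (matching w2 ∪ S2))
    (hunm1 : ∀ z, z ∉ matchedPos (matching w1 ∪ S1) →
        ∃ τ, min r (m - r) ≤ τ ∧ τ < m - min r (m - r) ∧ P τ = z)
    (hunm2' : ∀ τ, min r (m - r) ≤ τ → τ < m - min r (m - r) →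
        Q τ ∉ matchedPos (matching w2 ∪ S2))
    (hc : rot c (wT w1 r) = wT w2 r) :
    ∀ i, m - r ≤ i → i < m →
      Q i ∉ (Finset.range r).image (fun d => P (m - r + d) + c) →
      m - min r (m - r) ≤ i ∧ ¬ ((Q (m - 1 - i) - c).val < (Q i - c).val) := by
  set s := min r (m - r) with hs
  have hs2 : 2 * s ≤ m := by omega
  have hPinj : ∀ i j, i < m → j < m → P i = P j → i = j := by
    intro i j hi hj he
    rcases Nat.lt_trichotomy i j with h | h | h
    · exact absurd (he ▸ hmono1 i j h hj) (lt_irrefl _)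
    · exact h
    · exact absurd (he ▸ hmono1 j i h hi) (by omega)
  have hQinj : ∀ i j, i < m → j < m → Q i = Q j → i = j := by
    intro i j hi hj he
    rcases Nat.lt_trichotomy i j with h | h | h
    · exact absurd (he ▸ hmono2 i j h hj) (lt_irrefl _)
    · exact h
    · exact absurd (he ▸ hmono2 j i h hi) (by omega)
  have hg1 := good_of_reachable (matching_isMaximal w1).1
  have hg2 := good_of_reachable (matching_isMaximal w2).1
  have hMeq : matching w2 ∪ S2 = pshift c (matching w1 ∪ S1) := by
    refine maximal_matching_unique hMax2 ?_
    have := isMaximal_shift c hMax1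
    rwa [hc] at this
  intro i him hi hQT
  have hInT : ∀ τ, m - r ≤ τ → τ < m → P τ + c ≠ Q i := by
    intro τ h1 h2 he
    exact hQT (Finset.mem_image.2 ⟨τ - (m - r), Finset.mem_range.2 (by omega), by
      rw [show m - r + (τ - (m - r)) = τ from by omega]; exact he⟩)
  have him_s : m - s ≤ i := by
    by_contra hcon
    push_neg at hcon
    have h1 : Q i ∉ matchedPos (matching w2 ∪ S2) := hunm2' i (by omega) (by omega)
    rw [hMeq, matchedPos_pshift] at h1
    have h2 : Q i - c ∉ matchedPos (matching w1 ∪ S1) := fun hmm =>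
      h1 (Finset.mem_image.2 ⟨Q i - c, hmm, by simp [sub_add_cancel]⟩)
    obtain ⟨τ, hτ1, hτ2, hPτ⟩ := hunm1 _ h2
    have h3 : wT w1 r (Q i - c) = false := by
      have h4 : wT w2 r (Q i) = false := hlf2 i hi him
      rw [← hc] at h4
      exact h4
    have hτr : m - r ≤ τ := by
      by_contra hcon2
      push_neg at hcon2
      rw [← hPτ, hlt1 τ (by omega) hcon2] at h3
      simp at h3
    exact hInT τ hτr (by omega) (by rw [hPτ, sub_add_cancel])
  refine ⟨him_s, ?_⟩
  intro hcr
  set t' := m - 1 - i with ht'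
  have ht's : t' < s := by omega
  have ht'm : t' < m := by omega
  have hP'S2 : (Q i, Q t') ∈ S2 := by
    rw [hS2]
    refine Finset.mem_image.2 ⟨t', Finset.mem_range.2 ht's, ?_⟩
    rw [show m - 1 - t' = i from by omega]
  have hP'M2 : (Q i, Q t') ∈ matching w2 ∪ S2 := Finset.mem_union_right _ hP'S2
  rw [hMeq] at hP'M2
  have hP'M1 : (Q i - c, Q t' - c) ∈ matching w1 ∪ S1 := mem_pshift.1 hP'M2
  rcases Finset.mem_union.1 hP'M1 with hA | hS1m
  swap
  · -- pair comes from the seam of `w1`: then `Q i ∈ T`, contradiction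
    rw [hS1] at hS1m
    obtain ⟨t, ht, he⟩ := Finset.mem_image.1 hS1m
    rw [Finset.mem_range] at ht
    have he1 : P (m - 1 - t) = Q i - c := (Prod.mk.injEq .. ▸ he).1
    exact hInT (m - 1 - t) (by omega) (by omega) (by rw [he1, sub_add_cancel])
  · -- pair is in `matching w1`
    set a := Q i - c with ha
    set b' := Q t' - c with hb'
    -- the arc of (a,b') wraps and avoids all P's
    have hwrap : b'.val < a.val := hcr
    have havoid := hg1.avoid (a, b') hA
    have hPm1U : P (m - 1) ∉ matchedPos (matching w1) :=
      mem_unmatchedPos.1 (hmem1 (m - 1) (by omega))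
    have hP0U : P 0 ∉ matchedPos (matching w1) := mem_unmatchedPos.1 (hmem1 0 hm0)
    have hma : (P (m - 1)).val < a.val := by
      by_contra hcon
      push_neg at hcon
      refine havoid (P (m - 1)) hPm1U ?_
      show (P (m - 1) - a).val ≤ (b' - a).val
      have h1 := (P (m - 1)).isLt
      have h2 := a.isLt
      rw [vsub (P (m - 1)) a, vsub b' a]
      split_ifs <;> omega
    have hmb : b'.val < (P 0).val := by
      by_contra hcon
      push_neg at hcon
      refine havoid (P 0) hP0U ?_
      show (P 0 - a).val ≤ (b' - a).val
      have h1 := (P 0).isLt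
      have h2 := a.isLt
      have h3 : (P 0).val ≤ (P (m-1)).val := by
        rcases Nat.eq_or_lt_of_le (Nat.zero_le (m-1)) with h | h
        · rw [← h]
        · exact le_of_lt (hmono1 0 (m-1) h (by omega))
      rw [vsub (P 0) a, vsub b' a]
      split_ifs <;> omega
    -- each seam pair of w1, shifted, is a seam pair of w2 strictly above t'
    have hσ : ∀ t, t < s → ∃ τ, τ < s ∧ t' < τ ∧
        (P (m - 1 - t) + c, P t + c) = (Q (m - 1 - τ), Q τ) := by
      intro t ht
      have hσS1 : (P (m - 1 - t), P t) ∈ S1 := by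
        rw [hS1]
        exact Finset.mem_image.2 ⟨t, Finset.mem_range.2 ht, rfl⟩
      have hσM2 : (P (m - 1 - t) + c, P t + c) ∈ matching w2 ∪ S2 := by
        rw [hMeq]
        exact pshift_mem (Finset.mem_union_right _ hσS1)
      have hcont : (Q t' - (P (m - 1 - t) + c)).val ≤ ((P t + c) - (P (m - 1 - t) + c)).val := by
        have e1 : Q t' - (P (m - 1 - t) + c) = b' - P (m - 1 - t) := by rw [hb']; ring
        have e2 : (P t + c) - (P (m - 1 - t) + c) = P t - P (m - 1 - t) := by ring
        rw [e1, e2]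
        have hb'Pt : b'.val < (P t).val := by
          have : (P 0).val ≤ (P t).val := by
            rcases Nat.eq_zero_or_pos t with rfl | h
            · exact le_refl _
            · exact le_of_lt (hmono1 0 t h (by omega))
          omega
        have hPtm : (P t).val < (P (m - 1 - t)).val := hmono1 t (m - 1 - t) (by omega) (by omega)
        have h1 := b'.isLt
        have h2 := (P (m - 1 - t)).isLt
        rw [vsub b' (P (m - 1 - t)), vsub (P t) (P (m - 1 - t))]
        split_ifs <;> omega
      rcases Finset.mem_union.1 hσM2 with hA' | hS2'
      · exfalso
        have hQt'U : Q t' ∉ matchedPos (matching w2) := mem_unmatchedPos.1 (hmem2 t' ht'm)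
        exact hg2.avoid _ hA' (Q t') hQt'U hcont
      · rw [hS2] at hS2'
        obtain ⟨τ, hτ, he⟩ := Finset.mem_image.1 hS2'
        rw [Finset.mem_range] at hτ
        refine ⟨τ, hτ, ?_, he.symm⟩
        have he1 : Q (m - 1 - τ) = P (m - 1 - t) + c := (Prod.mk.injEq .. ▸ he).1
        have he2 : Q τ = P t + c := (Prod.mk.injEq .. ▸ he).2
        -- τ ≥ t'
        have hτt' : t' ≤ τ := by
          by_contra hcon
          push_neg at hcon
          rw [← he1, ← he2] at hcont
          have hv1 : (Q τ).val < (Q t').val := hmono2 τ t' hcon ht'm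
          have hv2 : (Q t').val < (Q (m - 1 - τ)).val :=
            hmono2 t' (m - 1 - τ) (by omega) (by omega)
          have h1 := (Q (m - 1 - τ)).isLt
          rw [vsub (Q t') (Q (m - 1 - τ)), vsub (Q τ) (Q (m - 1 - τ))] at hcont
          split_ifs at hcont <;> omega
        rcases Nat.eq_or_lt_of_le hτt' with h | h
        · exfalso
          -- σ_t = P' : then Q i ∈ T
          have hQe : Q (m - 1 - τ) = Q i := by
            rw [← h, show m - 1 - t' = i from by omega]
          rw [hQe] at he1
          exact hInT (m - 1 - t) (by omega) (by omega) he1.symm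
        · exact h
    -- choose and count
    have hσ' : ∀ t, ∃ τ, t < s → (τ < s ∧ t' < τ ∧
        (P (m - 1 - t) + c, P t + c) = (Q (m - 1 - τ), Q τ)) := by
      intro t
      by_cases ht : t < s
      · obtain ⟨τ, h⟩ := hσ t ht
        exact ⟨τ, fun _ => h⟩
      · exact ⟨0, fun h => absurd h ht⟩
    choose f hf using hσ'
    have hinj : Set.InjOn f (Finset.range s : Set ℕ) := by
      intro t1 ht1 t2 ht2 he
      simp only [Finset.coe_range, Set.mem_Iio] at ht1 ht2
      have h1 := (hf t1 ht1).2.2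
      have h2 := (hf t2 ht2).2.2
      rw [he] at h1
      have : P (m - 1 - t1) + c = P (m - 1 - t2) + c := by
        have e1 : P (m - 1 - t1) + c = Q (m - 1 - f t2) := (Prod.mk.injEq .. ▸ h1).1
        have e2 : P (m - 1 - t2) + c = Q (m - 1 - f t2) := (Prod.mk.injEq .. ▸ h2).1
        rw [e1, e2]
      have := hPinj (m - 1 - t1) (m - 1 - t2) (by omega) (by omega) (by
        have := congrArg (· - c) this
        simpa using this)
      omega
    have hmaps : ∀ t ∈ Finset.range s, f t ∈ Finset.Ioo t' s := by
      intro t ht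
      rw [Finset.mem_range] at ht
      exact Finset.mem_Ioo.2 ⟨(hf t ht).2.1, (hf t ht).1⟩
    have hcard := Finset.card_le_card_of_injOn f hmaps hinj
    rw [Nat.card_Ioo, Finset.card_range] at hcard
    omega

end Aux5
section Aux6

set_option linter.unusedSectionVars false

variable {n : ℕ} [NeZero n]

lemma vadd (a b : Fin n) :
    (a + b).val = if a.val + b.val < n then a.val + b.val else a.val + b.val - n := by
  have ha := a.isLt
  have hb := b.isLt
  rw [Fin.add_def]
  simp only []
  split_ifs with h
  · exact Nat.mod_eq_of_lt h
  · have h2 : a.val + b.val = (a.val + b.val - n) + n := by omega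
    rw [h2, Nat.add_mod_right, Nat.mod_eq_of_lt (by omega)]
    omega

end Aux6
/-- Descending chains do not merge (injectivity on the lower half of
ranks): let `u` be a necklace and `k` an integer with `2k > n` and `rank u ≤ k`.  If `v`
and `v'` are necklaces of rank `k` with Lyndon representatives `w` and `w'` respectively,
each having exactly `2k − n` unmatched positions, and `u` is both the necklace of `w_r`
and of `w'_r` where `r = k − rank u`, then `v = v'`. -/
theorem descending_chains_do_not_merge (n : ℕ) [NeZero n] (u : Necklace n) (k : ℕ)
    (hk : n < 2 * k) (hu : rank u ≤ k)
    (v v' : Necklace n) (hv : rank v = k) (hv' : rank v' = k)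
    (w w' : Word n)
    (hwv : nec w = v) (hwL : IsLyndon w) (hwm : (unmatchedPos w).card = 2 * k - n)
    (hw'v : nec w' = v') (hw'L : IsLyndon w') (hw'm : (unmatchedPos w').card = 2 * k - n)
    (hr : nec (wT w (k - rank u)) = u) (hr' : nec (wT w' (k - rank u)) = u) :
    v = v' := by
  classical
  set r := k - rank u with hrdef
  have hwtw : wt w = k := by
    have h := rank_nec w
    rw [hwv, hv] at h
    exact h.symm
  have hwtw' : wt w' = k := by
    have h := rank_nec w'
    rw [hw'v, hv'] at h
    exact h.symm
  set m := 2 * k - n with hmdef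
  have hm0 : 0 < m := by omega
  have hone := all_unmatched_true hwtw hk hwm
  have hone' := all_unmatched_true hwtw' hk hw'm
  -- r ≤ m
  have hranku : rank u = wt (wT w r) := by rw [← hr, rank_nec]
  have hge : wt w ≤ wt (wT w r) + (unmatchedPos w).card := by
    have hsub : (Finset.univ.filter fun i => w i = true) \ unmatchedPos w ⊆
        (Finset.univ.filter fun i => wT w r i = true) := by
      intro z hz
      rw [Finset.mem_sdiff] at hz
      obtain ⟨hz1, hz2⟩ := hz
      rw [Finset.mem_filter] at hz1 ⊢
      exact ⟨Finset.mem_univ z, by rw [wT_apply_not_unmatched hz2]; exact hz1.2⟩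
    calc wt w ≤ ((Finset.univ.filter fun i => w i = true) \ unmatchedPos w).card
        + (unmatchedPos w).card := Finset.card_le_card_sdiff_add_card
      _ ≤ wt (wT w r) + (unmatchedPos w).card := by
          exact Nat.add_le_add_right (Finset.card_le_card hsub) _
  have hrm : r ≤ m := by omega
  obtain ⟨P, S1, hS1, hmono1, hmem1, hsurj1, hones1, hlf1, hlt1, hMax1, hunm1, hunm1'⟩ :=
    structure_main hwm hone hrm hm0
  obtain ⟨Q, S2, hS2, hmono2, hmem2, hsurj2, hones2, hlf2, hlt2, hMax2, hunm2, hunm2'⟩ :=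
    structure_main hw'm hone' hrm hm0
  have hxx : nec (wT w r) = nec (wT w' r) := hr.trans hr'.symm
  obtain ⟨c, hc⟩ : ∃ c : Fin n, rot c (wT w r) = wT w' r := Quotient.exact hxx
  set Fs1 : Finset (Fin n) := (Finset.range r).image (fun d => P (m - r + d)) with hFs1
  set Fs2 : Finset (Fin n) := (Finset.range r).image (fun d => Q (m - r + d)) with hFs2
  set T : Finset (Fin n) := Fs1.image (· + c) with hT
  have hFs1mem : ∀ z, z ∈ Fs1 ↔ ∃ τ, m - r ≤ τ ∧ τ < m ∧ P τ = z := by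
    intro z
    rw [hFs1]
    simp only [Finset.mem_image, Finset.mem_range]
    constructor
    · rintro ⟨d, hd, rfl⟩
      exact ⟨m - r + d, by omega, by omega, rfl⟩
    · rintro ⟨τ, h1, h2, rfl⟩
      exact ⟨τ - (m - r), by omega, by rw [show m - r + (τ - (m - r)) = τ from by omega]⟩
  have hFs2mem : ∀ z, z ∈ Fs2 ↔ ∃ τ, m - r ≤ τ ∧ τ < m ∧ Q τ = z := by
    intro z
    rw [hFs2]
    simp only [Finset.mem_image, Finset.mem_range]
    constructor
    · rintro ⟨d, hd, rfl⟩
      exact ⟨m - r + d, by omega, by omega, rfl⟩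
    · rintro ⟨τ, h1, h2, rfl⟩
      exact ⟨τ - (m - r), by omega, by rw [show m - r + (τ - (m - r)) = τ from by omega]⟩
  have hw_on : ∀ z ∈ Fs1, w z = true ∧ wT w r z = false := by
    intro z hz
    obtain ⟨τ, h1, h2, rfl⟩ := (hFs1mem z).1 hz
    exact ⟨hones1 τ h2, hlf1 τ h2 h1⟩
  have hw'_on : ∀ z ∈ Fs2, w' z = true ∧ wT w' r z = false := by
    intro z hz
    obtain ⟨τ, h1, h2, rfl⟩ := (hFs2mem z).1 hz
    exact ⟨hones2 τ h2, hlf2 τ h2 h1⟩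
  have hw_off : ∀ z, z ∉ Fs1 → wT w r z = w z := by
    intro z hz
    by_cases hzU : z ∈ unmatchedPos w
    · obtain ⟨τ, hτ, rfl⟩ := hsurj1 z hzU
      have hτr : τ < m - r := by
        by_contra hcon
        push_neg at hcon
        exact hz ((hFs1mem _).2 ⟨τ, hcon, hτ, rfl⟩)
      rw [hlt1 τ hτ hτr, hones1 τ hτ]
    · exact wT_apply_not_unmatched hzU
  have hw'_off : ∀ z, z ∉ Fs2 → wT w' r z = w' z := by
    intro z hz
    by_cases hzU : z ∈ unmatchedPos w'
    · obtain ⟨τ, hτ, rfl⟩ := hsurj2 z hzU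
      have hτr : τ < m - r := by
        by_contra hcon
        push_neg at hcon
        exact hz ((hFs2mem _).2 ⟨τ, hcon, hτ, rfl⟩)
      rw [hlt2 τ hτ hτr, hones2 τ hτ]
    · exact wT_apply_not_unmatched hzU
  have hL1 := lambda_core hm0 hrm hS1 hS2 hmono1 hmono2 hmem1 hmem2 hlt1 hlf2
    hMax1 hMax2 hunm1 hunm2' hc
  have hc2 : rot (-c) (wT w' r) = wT w r := by rw [← hc, rot_neg_rot]
  have hL2 := lambda_core hm0 hrm hS2 hS1 hmono2 hmono1 hmem2 hmem1 hlt2 hlf1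
    hMax2 hMax1 hunm2 hunm1' hc2
  have hs2m : 2 * min r (m - r) ≤ m := by omega
  -- K1 : elements of Fs2 \ T have value ≥ c
  have hK1 : ∀ β, β ∈ Fs2 → β ∉ T → c.val ≤ β.val := by
    intro β hβ hβT
    obtain ⟨i, hi1, hi2, rfl⟩ := (hFs2mem β).1 hβ
    have hβT' : Q i ∉ (Finset.range r).image (fun d => P (m - r + d) + c) := by
      intro hmem'
      apply hβT
      rw [hT, hFs1, Finset.image_image]
      exact hmem'
    obtain ⟨him_s, hncr⟩ := hL1 i hi1 hi2 hβT'
    by_contra hcon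
    push_neg at hcon
    apply hncr
    have hj' : (Q (m - 1 - i)).val < (Q i).val := hmono2 _ i (by omega) hi2
    have h1 := c.isLt
    have h2 := (Q i).isLt
    have h3 := (Q (m - 1 - i)).isLt
    rw [vsub (Q (m - 1 - i)) c, vsub (Q i) c]
    split_ifs <;> omega
  -- K2 : elements of T \ Fs2 have value < c
  have hK2 : ∀ α, α ∈ T → α ∉ Fs2 → α.val < c.val := by
    intro α hα hαF
    have hαc : α - c ∈ Fs1 := mem_image_addc.1 (by rwa [hT] at hα)
    obtain ⟨i, hi1, hi2, hPi⟩ := (hFs1mem _).1 hαc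
    have hPic : P i + c = α := by rw [hPi, sub_add_cancel]
    have hnotin : P i ∉ (Finset.range r).image (fun d => Q (m - r + d) + (-c)) := by
      intro hmem'
      obtain ⟨d, hd, he⟩ := Finset.mem_image.1 hmem'
      rw [Finset.mem_range] at hd
      apply hαF
      refine (hFs2mem α).2 ⟨m - r + d, by omega, by omega, ?_⟩
      have : Q (m - r + d) = P i + c := by
        have h2 := congrArg (· + c) he
        simpa [add_assoc] using h2
      rw [this, hPic]
    obtain ⟨him_s, hncr⟩ := hL2 i hi1 hi2 hnotin
    by_contra hcon
    push_neg at hcon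
    apply hncr
    have e1 : P (m - 1 - i) - (-c) = P (m - 1 - i) + c := sub_neg_eq_add _ _
    have e2 : P i - (-c) = P i + c := sub_neg_eq_add _ _
    rw [e1, e2, hPic]
    have hlt' : (P (m - 1 - i)).val < (P i).val := hmono1 _ i (by omega) hi2
    have h1 := c.isLt
    have h2 := (P i).isLt
    have h3 := (P (m - 1 - i)).isLt
    have hval : α.val = ((P i) + c).val := by rw [hPic]
    rw [vadd (P i) c] at hval
    rw [vadd (P (m - 1 - i)) c]
    split_ifs at hval ⊢ <;> omega
  -- cardinalities
  have hPinj : ∀ i j, i < m → j < m → P i = P j → i = j := by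
    intro i j hi hj he
    rcases Nat.lt_trichotomy i j with h | h | h
    · exact absurd (he ▸ hmono1 i j h hj) (lt_irrefl _)
    · exact h
    · exact absurd (he ▸ hmono1 j i h hi) (by omega)
  have hQinj : ∀ i j, i < m → j < m → Q i = Q j → i = j := by
    intro i j hi hj he
    rcases Nat.lt_trichotomy i j with h | h | h
    · exact absurd (he ▸ hmono2 i j h hj) (lt_irrefl _)
    · exact h
    · exact absurd (he ▸ hmono2 j i h hi) (by omega)
  have hcardFs1 : Fs1.card = r := by
    rw [hFs1, Finset.card_image_of_injOn, Finset.card_range]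
    intro a ha b hb he
    simp only [Finset.coe_range, Set.mem_Iio] at ha hb
    have := hPinj (m - r + a) (m - r + b) (by omega) (by omega) he
    omega
  have hcardT : T.card = r := by
    rw [hT, Finset.card_image_of_injective _ (add_left_injective c), hcardFs1]
  have hcardFs2 : Fs2.card = r := by
    rw [hFs2, Finset.card_image_of_injOn, Finset.card_range]
    intro a ha b hb he
    simp only [Finset.coe_range, Set.mem_Iio] at ha hb
    have := hQinj (m - r + a) (m - r + b) (by omega) (by omega) he
    omega
  by_cases hTT : T = Fs2
  · -- the words agree up to rotation
    have hcw : rot c w = w' := by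
      funext z
      show w (z - c) = w' z
      by_cases hz : z - c ∈ Fs1
      · have hzT : z ∈ Fs2 := by
          rw [← hTT, hT]
          exact mem_image_addc.2 hz
        rw [(hw_on _ hz).1, (hw'_on _ hzT).1]
      · have hzT : z ∉ Fs2 := by
          rw [← hTT, hT]
          exact fun hmem' => hz (mem_image_addc.1 hmem')
        have h1 : wT w r (z - c) = w (z - c) := hw_off _ hz
        have h2 : wT w' r z = w' z := hw'_off _ hzT
        have h3 : wT w' r z = wT w r (z - c) := by rw [← hc]; rfl
        rw [← h1, ← h3, h2]
    rw [← hwv, ← hw'v, ← hcw, nec_rot]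
  · exfalso
    have hne1 : ∃ α, α ∈ T ∧ α ∉ Fs2 := by
      by_contra hcon
      push_neg at hcon
      exact hTT (Finset.eq_of_subset_of_card_le (fun α hα => hcon α hα)
        (by rw [hcardT, hcardFs2]))
    have hne2 : ∃ β, β ∈ Fs2 ∧ β ∉ T := by
      by_contra hcon
      push_neg at hcon
      exact hTT (Finset.eq_of_subset_of_card_le (fun β hβ => hcon β hβ)
        (by rw [hcardT, hcardFs2])).symm
    obtain ⟨α1, hα1T, hα1F⟩ := hne1
    obtain ⟨β1, hβ1F, hβ1T⟩ := hne2
    set D1 : Finset (Fin n) := T \ Fs2 with hD1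
    have hD1ne : D1.Nonempty := ⟨α1, Finset.mem_sdiff.2 ⟨hα1T, hα1F⟩⟩
    set α0 := D1.min' hD1ne with hα0def
    have hα0 : α0 ∈ T ∧ α0 ∉ Fs2 := Finset.mem_sdiff.1 (D1.min'_mem hD1ne)
    have hSLT1 : SLT (rot c w) w' := by
      refine ⟨α0, ?_, ?_, ?_⟩
      · intro j hj
        show w (j - c) = w' j
        by_cases hjT : j ∈ T <;> by_cases hjF : j ∈ Fs2
        · rw [(hw_on _ (mem_image_addc.1 (by rwa [hT] at hjT))).1, (hw'_on _ hjF).1]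
        · exact absurd (D1.min'_le j (Finset.mem_sdiff.2 ⟨hjT, hjF⟩)) (not_le.2 hj)
        · exfalso
          have h1 := hK1 j hjF hjT
          have h2 := hK2 α0 hα0.1 hα0.2
          have h3 : j.val < α0.val := hj
          omega
        · rw [← hw_off (j - c) (fun hj1 => hjT (by rw [hT]; exact mem_image_addc.2 hj1)),
            ← hw'_off _ hjF]
          show wT w r (j - c) = wT w' r j
          rw [← hc]
          rfl
      · show w (α0 - c) = true
        exact (hw_on _ (mem_image_addc.1 (by rw [← hT]; exact hα0.1))).1
      · rw [← hw'_off _ hα0.2, ← hc]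
        show wT w r (α0 - c) = false
        exact (hw_on _ (mem_image_addc.1 (by rw [← hT]; exact hα0.1))).2
    set D2 : Finset (Fin n) := Fs2 \ T with hD2
    have hD2ne : D2.Nonempty := ⟨β1, Finset.mem_sdiff.2 ⟨hβ1F, hβ1T⟩⟩
    have hBne : (D2.image (· - c)).Nonempty := hD2ne.image _
    set ζ := (D2.image (· - c)).min' hBne with hζdef
    obtain ⟨β0, hβ0D, hβ0e⟩ := Finset.mem_image.1 ((D2.image (· - c)).min'_mem hBne)
    have hβ0ζ : β0 - c = ζ := by rw [hζdef]; exact hβ0e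
    have hβ0 : β0 ∈ Fs2 ∧ β0 ∉ T := Finset.mem_sdiff.1 hβ0D
    have hSLT2 : SLT (rot (-c) w') w := by
      refine ⟨ζ, ?_, ?_, ?_⟩
      · intro j hj
        show w' (j - -c) = w j
        rw [sub_neg_eq_add]
        by_cases hδT : (j + c) ∈ T <;> by_cases hδF : (j + c) ∈ Fs2
        · have hjFs1 : j ∈ Fs1 := by
            have := mem_image_addc.1 (by rwa [hT] at hδT)
            rwa [add_sub_cancel_right] at this
          rw [(hw'_on _ hδF).1, (hw_on j hjFs1).1]
        · exfalso
          have h2 := hK2 _ hδT hδF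
          have h1 := hK1 _ hβ0.1 hβ0.2
          have hjlt : j.val < ζ.val := hj
          have hζv : ζ.val = (β0 - c).val := by rw [hβ0ζ]
          have h3 := c.isLt
          have h4 := β0.isLt
          have h5 := j.isLt
          rw [vsub β0 c] at hζv
          rw [vadd j c] at h2
          split_ifs at hζv h2 <;> omega
        · exfalso
          have hmem' : j ∈ D2.image (· - c) := Finset.mem_image.2
            ⟨j + c, Finset.mem_sdiff.2 ⟨hδF, hδT⟩, by rw [add_sub_cancel_right]⟩
          exact absurd ((D2.image (· - c)).min'_le j hmem') (not_le.2 hj)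
        · rw [← hw'_off _ hδF, ← hc,
            ← hw_off j (fun hj1 => hδT (by rw [hT]; exact Finset.mem_image.2 ⟨j, hj1, rfl⟩))]
          show wT w r ((j + c) - c) = wT w r j
          rw [add_sub_cancel_right]
      · show w' (ζ - -c) = true
        rw [sub_neg_eq_add, ← hβ0ζ, sub_add_cancel]
        exact (hw'_on _ hβ0.1).1
      · rw [← hβ0ζ]
        have hnF : β0 - c ∉ Fs1 := fun hmem' =>
          hβ0.2 (by rw [hT]; exact mem_image_addc.2 hmem')
        rw [← hw_off _ hnF]
        have he : wT w r (β0 - c) = wT w' r β0 := by rw [← hc]; rfl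
        rw [he]
        exact (hw'_on _ hβ0.1).2
    have hA := lexLE_SLT_trans (hwL c) hSLT1
    have hB := SLT_lexLE_trans hA (hw'L (-c))
    exact SLT.irrefl w (SLT.trans hB hSLT2)
end

section
/- Unimodality of the rank sizes of B_n/C_n: let N(n,k) denote the number of necklaces of length n with exactly k ones. If 2(k+1) ≤ n then N(n,k) ≤ N(n,k+1), and if 2k ≥ n and k + 1 ≤ n then N(n,k) ≥ N(n,k+1); hence the sequence N(n,0), N(n,1), …, N(n,n) is unimodal. -/
variable {n : ℕ} [NeZero n]

/-! ### Auxiliary development for the unimodality proof.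

We use the linear-algebraic (sl₂ raising operator) argument: the up operator `U` on
rational-valued functions on words satisfies `‖Uf‖² = ‖Df‖² + (n-2k)‖f‖²` on level `k`,
hence is injective for `2k < n`; it commutes with rotation, so it descends to an
injective linear map between the spaces of functions on necklaces of ranks `k` and
`k+1`, whose dimensions are the necklace counts.  The upper half follows from the
lower half by complementation. -/

namespace NecklaceAux

open Finset Function

variable {n : ℕ} [NeZero n]

lemma rot_apply (i : Fin n) (w : Word n) (j : Fin n) : rot i w j = w (j - i) := rfl

lemma wt_rot (i : Fin n) (w : Word n) : wt (rot i w) = wt w := by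
  unfold wt
  apply Finset.card_bij (fun j _ => j - i)
  · intro a ha
    simp only [Finset.mem_filter, Finset.mem_univ, true_and, rot_apply] at ha ⊢
    exact (Finset.mem_filter.mp ha).2
  · intro a _ b _ hab
    exact sub_left_inj.mp hab
  · intro b hb
    refine ⟨b + i, ?_, by rw [add_sub_cancel_right]⟩
    simp only [Finset.mem_filter, Finset.mem_univ, true_and, rot_apply,
      add_sub_cancel_right] at hb ⊢
    exact Finset.mem_filter.mpr ⟨Finset.mem_univ _, by rw [add_sub_cancel_right]; exact hb⟩

lemma nec_rot (i : Fin n) (w : Word n) : nec (rot i w) = nec w := by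
  have h : (rotSetoid n).r w (rot i w) := ⟨i, rfl⟩
  exact (Quotient.sound h).symm

lemma nec_surj (u : Necklace n) : ∃ w : Word n, nec w = u := ⟨u.out, u.out_eq⟩

lemma rank_nec (w : Word n) : rank (nec w) = wt w := by
  have hx : (rotSetoid n).r (Quotient.out (nec w)) w := Quotient.exact ((nec w).out_eq)
  obtain ⟨i, hi⟩ := hx
  show wt (Quotient.out (nec w)) = wt w
  conv_rhs => rw [← hi]
  rw [wt_rot]

/-- The up operator. -/
noncomputable def Uop (f : Word n → ℚ) : Word n → ℚ := fun w =>
  ∑ i ∈ Finset.univ.filter (fun i => w i = true), f (Function.update w i false)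

/-- The down operator. -/
noncomputable def Dop (f : Word n → ℚ) : Word n → ℚ := fun w =>
  ∑ i ∈ Finset.univ.filter (fun i => w i = false), f (Function.update w i true)

lemma upd_upd (w : Word n) (j : Fin n) {b : Bool} (h : w j = b) (c : Bool) :
    Function.update (Function.update w j c) j b = w := by
  rw [Function.update_idem, ← h, Function.update_eq_self]

lemma update_rot (w : Word n) (i j : Fin n) (b : Bool) :
    Function.update (rot i w) j b = rot i (Function.update w (j - i) b) := by
  funext m
  simp only [Function.update_apply, rot_apply, sub_left_inj]

lemma Uop_rot (f : Word n → ℚ) (hf : ∀ (i : Fin n) (w : Word n), f (rot i w) = f w)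
    (i : Fin n) (w : Word n) : Uop f (rot i w) = Uop f w := by
  unfold Uop
  apply Finset.sum_bij (fun j _ => j - i)
  · intro a ha
    simp only [Finset.mem_filter, Finset.mem_univ, true_and, rot_apply] at ha ⊢
    exact (Finset.mem_filter.mp ha).2
  · intro a _ b _ hab
    exact sub_left_inj.mp hab
  · intro b hb
    refine ⟨b + i, ?_, by rw [add_sub_cancel_right]⟩
    simp only [Finset.mem_filter, Finset.mem_univ, true_and, rot_apply,
      add_sub_cancel_right] at hb ⊢
    exact Finset.mem_filter.mpr ⟨Finset.mem_univ _, by rw [add_sub_cancel_right]; exact hb⟩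
  · intro a _
    rw [update_rot, hf]

lemma Uop_add (f g : Word n → ℚ) : Uop (f + g) = Uop f + Uop g := by
  funext w
  simp [Uop, Finset.sum_add_distrib]

lemma Uop_smul (c : ℚ) (f : Word n → ℚ) : Uop (c • f) = c • Uop f := by
  funext w
  simp [Uop, Finset.mul_sum]

/-- Adjointness of the two operators. -/
lemma adj (f g : Word n → ℚ) :
    ∑ w : Word n, Uop f w * g w = ∑ w : Word n, f w * Dop g w := by
  unfold Uop Dop
  simp_rw [Finset.sum_mul, Finset.mul_sum]
  rw [Finset.sum_sigma', Finset.sum_sigma']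
  apply Finset.sum_bij
    (fun x _ => (⟨Function.update x.1 x.2 false, x.2⟩ : Σ _ : Word n, Fin n))
  · intro x hx
    simp only [Finset.mem_sigma, Finset.mem_univ, Finset.mem_filter, true_and] at hx ⊢
    simp
  · intro x hx y hy hxy
    simp only [Finset.mem_sigma, Finset.mem_univ, Finset.mem_filter, true_and] at hx hy
    obtain ⟨h1, h2⟩ := Sigma.mk.inj_iff.mp hxy
    have h2' : x.2 = y.2 := eq_of_heq h2
    have h1' : x.1 = y.1 := by
      rw [← upd_upd x.1 x.2 hx false, h1, h2', upd_upd y.1 y.2 hy false]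
    exact Sigma.ext h1' h2
  · intro y hy
    simp only [Finset.mem_sigma, Finset.mem_univ, Finset.mem_filter, true_and] at hy
    refine ⟨⟨Function.update y.1 y.2 true, y.2⟩, ?_, ?_⟩
    · simp only [Finset.mem_sigma, Finset.mem_univ, Finset.mem_filter, true_and]
      simp
    · have : Function.update (Function.update y.1 y.2 true) y.2 false = y.1 :=
        upd_upd y.1 y.2 hy true
      exact Sigma.ext this (by rw [this])
  · intro x hx
    simp only [Finset.mem_sigma, Finset.mem_univ, Finset.mem_filter, true_and] at hx
    rw [upd_upd x.1 x.2 hx false]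

lemma wt_add_zeros (w : Word n) :
    wt w + (Finset.univ.filter fun i => w i = false).card = n := by
  unfold wt
  have he : (Finset.univ.filter fun i => w i = false)
      = Finset.univ.filter (fun i => ¬ (w i = true)) := by
    ext i; simp
  rw [he, Finset.card_filter_add_card_filter_not, Finset.card_univ,
    Fintype.card_fin]

lemma ones_update_true (w : Word n) (i : Fin n) (h : w i = false) :
    Finset.univ.filter (fun j => Function.update w i true j = true)
      = insert i (Finset.univ.filter fun j => w j = true) := by
  ext j
  by_cases hj : j = i
  · subst hj; simp
  · simp [Function.update_apply, hj]

lemma zeros_update_false (w : Word n) (i : Fin n) (h : w i = true) :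
    Finset.univ.filter (fun j => Function.update w i false j = false)
      = insert i (Finset.univ.filter fun j => w j = false) := by
  ext j
  by_cases hj : j = i
  · subst hj; simp
  · simp [Function.update_apply, hj]

lemma wt_update_false (w : Word n) (j : Fin n) (h : w j = true) :
    wt (Function.update w j false) + 1 = wt w := by
  unfold wt
  have he : Finset.univ.filter (fun i => Function.update w j false i = true)
      = (Finset.univ.filter fun i => w i = true).erase j := by
    ext i
    by_cases hi : i = j
    · subst hi; simp
    · simp [Function.update_apply, hi]
  have hmem : j ∈ Finset.univ.filter fun i => w i = true := by simp [h]
  rw [he, Finset.card_erase_of_mem hmem]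
  have := Finset.card_pos.mpr ⟨j, hmem⟩
  omega

/-- The commutation relation `DU + (wt w)·id = UD + (n - wt w)·id`, in subtraction-free
form. -/
lemma comm_rel (f : Word n → ℚ) (w : Word n) :
    Dop (Uop f) w + (wt w : ℚ) * f w
      = Uop (Dop f) w
        + (((Finset.univ.filter fun i => w i = false).card : ℚ)) * f w := by
  unfold Uop Dop wt
  have h1 : ∀ i ∈ Finset.univ.filter (fun i => w i = false),
      (∑ j ∈ Finset.univ.filter (fun j => Function.update w i true j = true),
          f (Function.update (Function.update w i true) j false))
        = f w + ∑ j ∈ Finset.univ.filter (fun j => w j = true),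
            f (Function.update (Function.update w i true) j false) := by
    intro i hi
    have hwi : w i = false := by simpa using hi
    rw [ones_update_true w i hwi, Finset.sum_insert (by simp [hwi])]
    rw [upd_upd w i hwi true]
  have h2 : ∀ j ∈ Finset.univ.filter (fun j => w j = true),
      (∑ i ∈ Finset.univ.filter (fun i => Function.update w j false i = false),
          f (Function.update (Function.update w j false) i true))
        = f w + ∑ i ∈ Finset.univ.filter (fun i => w i = false),
            f (Function.update (Function.update w j false) i true) := by
    intro j hj
    have hwj : w j = true := by simpa using hj
    rw [zeros_update_false w j hwj, Finset.sum_insert (by simp [hwj])]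
    rw [upd_upd w j hwj false]
  rw [Finset.sum_congr rfl h1, Finset.sum_congr rfl h2,
    Finset.sum_add_distrib, Finset.sum_add_distrib, Finset.sum_const, Finset.sum_const]
  have hswap : ∑ i ∈ Finset.univ.filter (fun i => w i = false),
        ∑ j ∈ Finset.univ.filter (fun j => w j = true),
          f (Function.update (Function.update w i true) j false)
      = ∑ j ∈ Finset.univ.filter (fun j => w j = true),
          ∑ i ∈ Finset.univ.filter (fun i => w i = false),
            f (Function.update (Function.update w j false) i true) := by
    rw [Finset.sum_comm]
    apply Finset.sum_congr rfl
    intro j hj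
    apply Finset.sum_congr rfl
    intro i hi
    have hwj : w j = true := by simpa using hj
    have hwi : w i = false := by simpa using hi
    have hne : i ≠ j := by
      intro hij; rw [hij, hwj] at hwi; exact Bool.noConfusion hwi
    rw [Function.update_comm hne]
  rw [hswap, nsmul_eq_mul, nsmul_eq_mul]
  ring

/-- Key injectivity estimate: the up operator is injective on functions supported on
level `k` provided `2k < n`. -/
lemma Uop_inj {k : ℕ} (hk : 2 * k < n) (f : Word n → ℚ)
    (hsupp : ∀ w, wt w ≠ k → f w = 0) (hU : ∀ w, Uop f w = 0) (w : Word n) :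
    f w = 0 := by
  set S : ℚ := ∑ v : Word n, f v * f v with hS
  have hS0 : 0 ≤ S := Finset.sum_nonneg fun v _ => mul_self_nonneg _
  have e1 : ∀ v : Word n, (wt v : ℚ) * (f v * f v) = (k : ℚ) * (f v * f v) := by
    intro v
    by_cases h : wt v = k
    · rw [h]
    · rw [hsupp v h]; ring
  have e2 : ∀ v : Word n,
      (((Finset.univ.filter fun i => v i = false).card : ℚ)) * (f v * f v)
        = ((n : ℚ) - k) * (f v * f v) := by
    intro v
    by_cases h : wt v = k
    · have hcard : wt v + (Finset.univ.filter fun i => v i = false).card = n :=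
        wt_add_zeros v
      have : ((Finset.univ.filter fun i => v i = false).card : ℚ) = (n : ℚ) - k := by
        have : (Finset.univ.filter fun i => v i = false).card = n - k := by omega
        rw [this]
        have hkn : k ≤ n := by omega
        push_cast [Nat.cast_sub hkn]
        ring
      rw [this]
    · rw [hsupp v h]; ring
  have hmain : ∑ v : Word n, f v * Dop (Uop f) v + (k : ℚ) * S
      = ∑ v : Word n, f v * Uop (Dop f) v + ((n : ℚ) - k) * S := by
    have hpt : ∀ v : Word n,
        f v * Dop (Uop f) v + (wt v : ℚ) * (f v * f v)
          = f v * Uop (Dop f) v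
            + (((Finset.univ.filter fun i => v i = false).card : ℚ)) * (f v * f v) := by
      intro v
      have h := comm_rel f v
      linear_combination f v * h
    have := Finset.sum_congr rfl (fun v (_ : v ∈ Finset.univ) => hpt v)
    rw [Finset.sum_add_distrib, Finset.sum_add_distrib] at this
    rw [hS, Finset.mul_sum, Finset.mul_sum]
    calc (∑ v : Word n, f v * Dop (Uop f) v) + ∑ v : Word n, (k : ℚ) * (f v * f v)
        = (∑ v : Word n, f v * Dop (Uop f) v)
            + ∑ v : Word n, (wt v : ℚ) * (f v * f v) := by
          congr 1; exact Finset.sum_congr rfl fun v _ => (e1 v).symm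
      _ = (∑ v : Word n, f v * Uop (Dop f) v)
            + ∑ v : Word n,
                (((Finset.univ.filter fun i => v i = false).card : ℚ)) * (f v * f v) :=
          this
      _ = (∑ v : Word n, f v * Uop (Dop f) v)
            + ∑ v : Word n, ((n : ℚ) - k) * (f v * f v) := by
          congr 1; exact Finset.sum_congr rfl fun v _ => e2 v
  have hA : ∑ v : Word n, f v * Dop (Uop f) v = 0 := by
    rw [← adj]
    apply Finset.sum_eq_zero
    intro v _
    rw [hU v]; ring
  have hB : ∑ v : Word n, f v * Uop (Dop f) v = ∑ v : Word n, Dop f v * Dop f v := by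
    have := adj (Dop f) f
    rw [← this]
    exact Finset.sum_congr rfl fun v _ => mul_comm _ _
  have hBnn : 0 ≤ ∑ v : Word n, Dop f v * Dop f v :=
    Finset.sum_nonneg fun v _ => mul_self_nonneg _
  have hcast : (2 * k : ℚ) < n := by exact_mod_cast hk
  have hSz : S = 0 := by nlinarith [hmain, hA, hB, hBnn, hS0]
  have hall := (Finset.sum_eq_zero_iff_of_nonneg
    (fun v (_ : v ∈ Finset.univ) => mul_self_nonneg (f v))).mp (by rw [← hS]; exact hSz)
  exact mul_self_eq_zero.mp (hall w (Finset.mem_univ w))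

/-- Lift a function on rank-`k` necklaces to an orbit-constant function on words,
supported on level `k`. -/
noncomputable def lifF (k : ℕ) (f : {u : Necklace n // rank u = k} → ℚ) :
    Word n → ℚ := fun w =>
  if h : wt w = k then f ⟨nec w, by rw [rank_nec]; exact h⟩ else 0

lemma lifF_rot (k : ℕ) (f : {u : Necklace n // rank u = k} → ℚ) (i : Fin n)
    (w : Word n) : lifF k f (rot i w) = lifF k f w := by
  unfold lifF
  by_cases h : wt w = k
  · rw [dif_pos (by rw [wt_rot]; exact h), dif_pos h]
    congr 1
    exact Subtype.ext (nec_rot i w)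
  · rw [dif_neg (by rw [wt_rot]; exact h), dif_neg h]

lemma lifF_supp (k : ℕ) (f : {u : Necklace n // rank u = k} → ℚ) (w : Word n)
    (h : wt w ≠ k) : lifF k f w = 0 := dif_neg h

lemma lifF_out (k : ℕ) (f : {u : Necklace n // rank u = k} → ℚ)
    (v : {u : Necklace n // rank u = k}) : lifF k f (Quotient.out v.1) = f v := by
  have h1 : wt (Quotient.out v.1) = k := v.2
  unfold lifF
  rw [dif_pos h1]
  congr 1
  apply Subtype.ext
  show nec (Quotient.out v.1) = v.1
  exact Quotient.out_eq _

lemma lifF_add (k : ℕ) (f g : {u : Necklace n // rank u = k} → ℚ) :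
    lifF k (f + g) = lifF k f + lifF k g := by
  funext w
  by_cases h : wt w = k <;> simp [lifF, h]

lemma lifF_smul (k : ℕ) (c : ℚ) (f : {u : Necklace n // rank u = k} → ℚ) :
    lifF k (c • f) = c • lifF k f := by
  funext w
  by_cases h : wt w = k <;> simp [lifF, h]

/-- The main inequality for the lower half of ranks. -/
lemma card_le_of (k : ℕ) (h : 2 * (k + 1) ≤ n) :
    Nat.card {u : Necklace n // rank u = k}
      ≤ Nat.card {u : Necklace n // rank u = k + 1} := by
  classical
  haveI : Fintype (Necklace n) := Fintype.ofFinite _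
  haveI : Fintype {u : Necklace n // rank u = k} := Fintype.ofFinite _
  haveI : Fintype {u : Necklace n // rank u = k + 1} := Fintype.ofFinite _
  let Φ : ({u : Necklace n // rank u = k} → ℚ)
      →ₗ[ℚ] ({u : Necklace n // rank u = k + 1} → ℚ) :=
    { toFun := fun f v => Uop (lifF k f) (Quotient.out v.1)
      map_add' := fun f g => by
        funext v
        show Uop (lifF k (f + g)) _ = Uop (lifF k f) _ + Uop (lifF k g) _
        rw [lifF_add, Uop_add]; rfl
      map_smul' := fun c f => by
        funext v
        show Uop (lifF k (c • f)) _ = c • Uop (lifF k f) _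
        rw [lifF_smul, Uop_smul]; rfl }
  have hker : ∀ f : {u : Necklace n // rank u = k} → ℚ, Φ f = 0 → f = 0 := by
    intro f hf
    have hrotf : ∀ (i : Fin n) (w : Word n), lifF k f (rot i w) = lifF k f w :=
      fun i w => lifF_rot k f i w
    have hUzero : ∀ w : Word n, Uop (lifF k f) w = 0 := by
      intro w
      by_cases hw : wt w = k + 1
      · obtain ⟨i, hi⟩ := Quotient.exact ((nec w).out_eq)
        have hv := congrFun hf ⟨nec w, by rw [rank_nec]; exact hw⟩
        rw [← hi, Uop_rot _ hrotf]
        exact hv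
      · apply Finset.sum_eq_zero
        intro j hj
        have hwj : w j = true := by simpa using hj
        apply lifF_supp
        have := wt_update_false w j hwj
        omega
    have hz : ∀ w : Word n, lifF k f w = 0 :=
      Uop_inj (by omega) _ (lifF_supp k f) hUzero
    funext v
    have := hz (Quotient.out v.1)
    rwa [lifF_out] at this
  have hinj : Function.Injective Φ := by
    intro f g hfg
    have : Φ (f - g) = 0 := by rw [map_sub, hfg, sub_self]
    have := hker _ this
    exact sub_eq_zero.mp this
  rw [Nat.card_eq_fintype_card, Nat.card_eq_fintype_card,
    ← Module.finrank_fintype_fun_eq_card ℚ, ← Module.finrank_fintype_fun_eq_card ℚ]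
  exact LinearMap.finrank_le_finrank_of_injective hinj

/-- Complementation on words. -/
def cword (w : Word n) : Word n := fun i => !(w i)

/-- Complementation on necklaces. -/
def cnec : Necklace n → Necklace n :=
  Quotient.map cword (by rintro w w' ⟨i, rfl⟩; exact ⟨i, rfl⟩)

lemma cnec_nec (w : Word n) : cnec (nec w) = nec (cword w) := rfl

lemma wt_cword (w : Word n) : wt w + wt (cword w) = n := by
  have h1 := wt_add_zeros w
  have h2 : wt (cword w) = (Finset.univ.filter fun i => w i = false).card := by
    unfold wt
    congr 1
    ext i
    simp [cword]
  omega

lemma rank_cnec (u : Necklace n) : rank (cnec u) + rank u = n := by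
  obtain ⟨w, rfl⟩ := nec_surj u
  rw [cnec_nec, rank_nec, rank_nec, add_comm]
  exact wt_cword w

lemma cnec_cnec (u : Necklace n) : cnec (cnec u) = u := by
  obtain ⟨w, rfl⟩ := nec_surj u
  rw [cnec_nec, cnec_nec]
  congr 1
  funext i
  simp [cword]

lemma card_compl (a : ℕ) (ha : a ≤ n) :
    Nat.card {u : Necklace n // rank u = a}
      = Nat.card {u : Necklace n // rank u = n - a} := by
  apply Nat.card_congr
  refine ⟨fun u => ⟨cnec u.1, ?_⟩, fun v => ⟨cnec v.1, ?_⟩, ?_, ?_⟩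
  · have := rank_cnec u.1
    rw [u.2] at this
    omega
  · have := rank_cnec v.1
    rw [v.2] at this
    omega
  · intro u
    exact Subtype.ext (cnec_cnec u.1)
  · intro v
    exact Subtype.ext (cnec_cnec v.1)

end NecklaceAux

/-- Unimodality of the rank sizes of `Bₙ/Cₙ`: writing `N k` for the
number of necklaces of length `n` with exactly `k` ones, if `2(k+1) ≤ n` then
`N k ≤ N (k+1)`, and if `2k ≥ n` and `k+1 ≤ n` then `N k ≥ N (k+1)`; hence the sequence
`N 0, N 1, …, N n` is unimodal. -/
theorem necklace_rank_unimodal (n : ℕ) [NeZero n] (k : ℕ) :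
    (2 * (k + 1) ≤ n →
      Nat.card {u : Necklace n // rank u = k} ≤
        Nat.card {u : Necklace n // rank u = k + 1}) ∧
    (n ≤ 2 * k → k + 1 ≤ n →
      Nat.card {u : Necklace n // rank u = k + 1} ≤
        Nat.card {u : Necklace n // rank u = k}) := by
  constructor
  · intro h
    exact NecklaceAux.card_le_of k h
  · intro h1 h2
    have e1 := NecklaceAux.card_compl (n := n) (k + 1) h2
    have e2 := NecklaceAux.card_compl (n := n) k (by omega)
    have h3 : 2 * ((n - (k + 1)) + 1) ≤ n := by omega
    have hmono := NecklaceAux.card_le_of (n := n) (n - (k + 1)) h3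
    have e3 : n - (k + 1) + 1 = n - k := by omega
    rw [e3] at hmono
    rw [e1, e2]
    exact hmono
end
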